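/- arXiv:1611.04420 — 3 statements merged into one kernel-verified Lean document; each statement's English description precedes it below -/
import Mathlib

section
/- Let d ≥ 1 and F ∈ C[−1,1]. Then F is positive definite on S^d if and only if for every pair of finite Borel measures μ, ν on S^d one has I_F(μ) + I_F(ν) ≥ 2 ∬_{S^d×S^d} F(x·y) dμ(x)dν(y) (equivalently, the energy of every finite signed Borel measure μ − ν on S^d is non-negative). -/
open MeasureTheory Metric Set
open scoped RealInnerProductSpace ENNReal

noncomputable section

/-- The unit sphere `S^d` in `ℝ^(d+1)`, realized as `EuclideanSpace ℝ (Fin (d+1))`. -/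
abbrev Sphere (d : ℕ) : Type _ := Metric.sphere (0 : EuclideanSpace ℝ (Fin (d + 1))) 1

/-- The uniform probability measure `σ` on `S^d` (the normalized surface measure):
the normalization of the cone (surface) measure associated to the Lebesgue measure. -/
def sphereMeasure (d : ℕ) : Measure (Sphere d) :=
  ((volume : Measure (EuclideanSpace ℝ (Fin (d + 1)))).toSphere univ)⁻¹ •
    (volume : Measure (EuclideanSpace ℝ (Fin (d + 1)))).toSphere

/-- Euclidean inner product `x · y` of two points on the sphere. -/
def ip {d : ℕ} (x y : Sphere d) : ℝ :=
  ⟪(x : EuclideanSpace ℝ (Fin (d + 1))), (y : EuclideanSpace ℝ (Fin (d + 1)))⟫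

/-- Euclidean distance `‖x - y‖` between two points on the sphere. -/
def eucl {d : ℕ} (x y : Sphere d) : ℝ :=
  ‖(x : EuclideanSpace ℝ (Fin (d + 1))) - (y : EuclideanSpace ℝ (Fin (d + 1)))‖

/-- The normalized geodesic distance `d(x,y) = arccos(x·y)/π` on the sphere. -/
def geo {d : ℕ} (x y : Sphere d) : ℝ := Real.arccos (ip x y) / Real.pi

/-- The open spherical cap `C(x,t) = {z ∈ S^d : z · x > t}`. -/
def cap {d : ℕ} (x : Sphere d) (t : ℝ) : Set (Sphere d) := {z | t < ip x z}

/-- The open hemisphere `H(x) = {z ∈ S^d : z · x > 0}`. -/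
def hemi {d : ℕ} (x : Sphere d) : Set (Sphere d) := {z | 0 < ip x z}

set_option linter.unusedSectionVars false

section Aux
open BoundedContinuousFunction

variable {X : Type*} [MetricSpace X] [CompactSpace X] [Nonempty X]
  [MeasurableSpace X] [OpensMeasurableSpace X]

lemma partition_exists (δ : ℝ) (hδ : 0 < δ) :
    ∃ (n : ℕ) (w : ℕ → X) (A : ℕ → Set X),
      (∀ k, MeasurableSet (A k)) ∧ (∀ k, A k ⊆ ball (w k) δ) ∧
      Pairwise (Function.onFun Disjoint A) ∧ (⋃ k ∈ Finset.range n, A k) = univ := by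
  obtain ⟨t, ht⟩ := isCompact_univ.elim_finite_subcover (fun x : X => ball x δ)
    (fun x => isOpen_ball) (fun x _ => mem_iUnion.mpr ⟨x, mem_ball_self hδ⟩)
  set n := t.card with hn
  set z : Fin n → X := fun i => (t.equivFin.symm i : X) with hz
  set w : ℕ → X := fun k => if h : k < n then z ⟨k, h⟩ else Classical.arbitrary X with hw
  set g : ℕ → Set X := fun k => if h : k < n then ball (w k) δ else ∅ with hg
  refine ⟨n, w, disjointed g, MeasurableSet.disjointed ?_, ?_, disjoint_disjointed g, ?_⟩
  · intro k
    simp only [hg]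
    split
    · exact measurableSet_ball
    · exact MeasurableSet.empty
  · intro k
    refine (disjointed_subset g k).trans ?_
    simp only [hg]
    split
    · exact subset_rfl
    · exact empty_subset _
  · apply eq_univ_of_forall
    intro x
    have hx : x ∈ ⋃ x0 ∈ t, ball x0 δ := ht (mem_univ x)
    obtain ⟨x0, hx0t, hx0⟩ := mem_iUnion₂.mp hx
    set i : Fin n := t.equivFin ⟨x0, hx0t⟩ with hi
    have hxg : x ∈ ⋃ k, g k := by
      refine mem_iUnion.mpr ⟨(i : ℕ), ?_⟩
      simp only [hg, hw]
      rw [dif_pos i.isLt, dif_pos i.isLt]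
      have hzi : z ⟨(i : ℕ), i.isLt⟩ = x0 := by
        simp only [hz, Fin.eta, hi, Equiv.symm_apply_apply]
      rw [hzi]; exact hx0
    rw [← iUnion_disjointed] at hxg
    obtain ⟨k, hk⟩ := mem_iUnion.mp hxg
    have hkn : k < n := by
      by_contra h
      have hgk : g k = ∅ := by simp only [hg]; rw [dif_neg h]
      exact absurd ((hgk ▸ disjointed_subset g k) hk) (notMem_empty x)
    exact mem_biUnion (Finset.mem_range.mpr hkn) hk

lemma cont_integrable (μ : Measure X) [IsFiniteMeasure μ] {f : X → ℝ} (hf : Continuous f) :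
    Integrable f μ := by
  obtain ⟨C, hC⟩ : ∃ C, ∀ x, |f x| ≤ C :=
    ⟨‖mkOfCompact ⟨f, hf⟩‖, fun x => by simpa using (mkOfCompact ⟨f, hf⟩).norm_coe_le_norm x⟩
  exact (integrable_const C).mono' hf.aestronglyMeasurable (ae_of_all _ fun x => by
    simpa using hC x)

omit [MetricSpace X] [CompactSpace X] [OpensMeasurableSpace X] in
lemma measure_decomp (μ : Measure X) [IsFiniteMeasure μ] (n : ℕ) (A : ℕ → Set X)
    (hAm : ∀ k, MeasurableSet (A k)) (hdisj : Pairwise (Function.onFun Disjoint A))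
    (hcov : (⋃ k ∈ Finset.range n, A k) = univ) :
    μ = ∑ k ∈ Finset.range n, μ.restrict (A k) := by
  ext s hs
  rw [Measure.coe_finset_sum, Finset.sum_apply]
  have h1 : s = ⋃ k ∈ Finset.range n, s ∩ A k := by
    rw [← inter_iUnion₂, hcov, inter_univ]
  calc μ s = μ (⋃ k ∈ Finset.range n, s ∩ A k) := by rw [← h1]
    _ = ∑ k ∈ Finset.range n, μ (s ∩ A k) := by
        refine measure_biUnion_finset ?_ fun k _ => hs.inter (hAm k)
        intro i _ j _ hij
        exact (hdisj hij).mono inter_subset_right inter_subset_right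
    _ = ∑ k ∈ Finset.range n, (μ.restrict (A k)) s := by
        refine Finset.sum_congr rfl fun k _ => ?_
        rw [Measure.restrict_apply hs]

lemma inner_cont {K : X → X → ℝ} (hK : Continuous fun p : X × X => K p.1 p.2)
    (ρ : Measure X) [IsFiniteMeasure ρ] : Continuous fun x => ∫ y, K x y ∂ρ := by
  obtain ⟨C, hC⟩ : ∃ C, ∀ p : X × X, |K p.1 p.2| ≤ C :=
    ⟨‖mkOfCompact ⟨_, hK⟩‖, fun p => by simpa using (mkOfCompact ⟨_, hK⟩).norm_coe_le_norm p⟩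
  apply continuous_of_dominated (bound := fun _ => C)
  · exact fun x => (hK.comp (Continuous.prodMk_right x)).aestronglyMeasurable
  · exact fun x => ae_of_all _ fun y => by simpa using hC (x, y)
  · exact integrable_const C
  · exact ae_of_all _ fun y => hK.comp (continuous_id.prodMk continuous_const)

lemma I_decomp {K : X → X → ℝ} (hK : Continuous fun p : X × X => K p.1 p.2)
    (μ ν : Measure X) [IsFiniteMeasure μ] [IsFiniteMeasure ν] (n : ℕ) (A : ℕ → Set X)
    (hAm : ∀ k, MeasurableSet (A k)) (hdisj : Pairwise (Function.onFun Disjoint A))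
    (hcov : (⋃ k ∈ Finset.range n, A k) = univ) :
    (∫ x, ∫ y, K x y ∂ν ∂μ) = ∑ i ∈ Finset.range n, ∑ j ∈ Finset.range n,
      ∫ x, ∫ y, K x y ∂(ν.restrict (A j)) ∂(μ.restrict (A i)) := by
  have hKx : ∀ x, Continuous fun y => K x y := fun x => hK.comp (Continuous.prodMk_right x)
  calc (∫ x, ∫ y, K x y ∂ν ∂μ)
      = ∑ i ∈ Finset.range n, ∫ x, ∫ y, K x y ∂ν ∂(μ.restrict (A i)) := by
        conv_lhs => rw [measure_decomp μ n A hAm hdisj hcov]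
        exact integral_finset_sum_measure fun i _ => cont_integrable _ (inner_cont hK ν)
    _ = ∑ i ∈ Finset.range n, ∑ j ∈ Finset.range n,
        ∫ x, ∫ y, K x y ∂(ν.restrict (A j)) ∂(μ.restrict (A i)) := by
        refine Finset.sum_congr rfl fun i _ => ?_
        have hinner : ∀ x, ∫ y, K x y ∂ν
            = ∑ j ∈ Finset.range n, ∫ y, K x y ∂(ν.restrict (A j)) := by
          intro x
          conv_lhs => rw [measure_decomp ν n A hAm hdisj hcov]
          exact integral_finset_sum_measure fun j _ => cont_integrable _ (hKx x)
        simp_rw [hinner]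
        exact integral_finset_sum _ fun j _ => cont_integrable _ (inner_cont hK (ν.restrict (A j)))

lemma piece_est {K : X → X → ℝ} (hK : Continuous fun p : X × X => K p.1 p.2)
    {ε δ : ℝ} (hKud : ∀ p q : X × X, dist p q < δ → |K p.1 p.2 - K q.1 q.2| ≤ ε)
    (ρ σ : Measure X) [IsFiniteMeasure ρ] [IsFiniteMeasure σ]
    {Ai Aj : Set X} (hAi : MeasurableSet Ai) (hAj : MeasurableSet Aj)
    {wi wj : X} (hsubi : Ai ⊆ ball wi δ) (hsubj : Aj ⊆ ball wj δ) :
    |(∫ x, ∫ y, K x y ∂(σ.restrict Aj) ∂(ρ.restrict Ai))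
      - K wi wj * (ρ Ai).toReal * (σ Aj).toReal|
      ≤ ε * ((ρ Ai).toReal * (σ Aj).toReal) := by
  have hKx : ∀ x, Continuous fun y => K x y := fun x => hK.comp (Continuous.prodMk_right x)
  set a := (ρ Ai).toReal
  set b := (σ Aj).toReal
  have ha : ((ρ.restrict Ai) univ).toReal = a := by rw [Measure.restrict_apply_univ]
  have hb : ((σ.restrict Aj) univ).toReal = b := by rw [Measure.restrict_apply_univ]
  have step1 : ∀ x ∈ Ai, |(∫ y, K x y ∂(σ.restrict Aj)) - K wi wj * b| ≤ ε * b := by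
    intro x hx
    have heq : (∫ y, K x y ∂(σ.restrict Aj)) - K wi wj * b
        = ∫ y, (K x y - K wi wj) ∂(σ.restrict Aj) := by
      rw [integral_sub (cont_integrable _ (hKx x)) (integrable_const _), integral_const, measureReal_def, hb,
        smul_eq_mul, mul_comm]
    rw [heq]
    have hbd : ∀ᵐ y ∂(σ.restrict Aj), ‖K x y - K wi wj‖ ≤ ε := by
      filter_upwards [ae_restrict_mem hAj] with y hy
      rw [Real.norm_eq_abs]
      refine hKud (x, y) (wi, wj) ?_
      rw [Prod.dist_eq]
      exact max_lt (hsubi hx) (hsubj hy)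
    calc |∫ y, (K x y - K wi wj) ∂(σ.restrict Aj)| ≤ ε * ((σ.restrict Aj) univ).toReal :=
          norm_integral_le_of_norm_le_const hbd
      _ = ε * b := by rw [hb]
  have heq2 : (∫ x, ∫ y, K x y ∂(σ.restrict Aj) ∂(ρ.restrict Ai)) - K wi wj * a * b
      = ∫ x, ((∫ y, K x y ∂(σ.restrict Aj)) - K wi wj * b) ∂(ρ.restrict Ai) := by
    rw [integral_sub (cont_integrable _ (inner_cont hK (σ.restrict Aj))) (integrable_const _),
      integral_const, measureReal_def, ha, smul_eq_mul]
    ring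
  rw [heq2]
  have hbd2 : ∀ᵐ x ∂(ρ.restrict Ai),
      ‖(∫ y, K x y ∂(σ.restrict Aj)) - K wi wj * b‖ ≤ ε * b := by
    filter_upwards [ae_restrict_mem hAi] with x hx
    rw [Real.norm_eq_abs]
    exact step1 x hx
  calc |∫ x, ((∫ y, K x y ∂(σ.restrict Aj)) - K wi wj * b) ∂(ρ.restrict Ai)|
      ≤ (ε * b) * ((ρ.restrict Ai) univ).toReal := norm_integral_le_of_norm_le_const hbd2
    _ = ε * (a * b) := by rw [ha]; ring

lemma mass_sum (ρ : Measure X) [IsFiniteMeasure ρ] (n : ℕ) (A : ℕ → Set X)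
    (hAm : ∀ k, MeasurableSet (A k)) (hdisj : Pairwise (Function.onFun Disjoint A))
    (hcov : (⋃ k ∈ Finset.range n, A k) = univ) :
    ∑ k ∈ Finset.range n, (ρ (A k)).toReal = (ρ univ).toReal := by
  rw [← ENNReal.toReal_sum (fun k _ => measure_ne_top ρ (A k))]
  congr 1
  rw [← measure_biUnion_finset (fun i _ j _ hij => hdisj hij) (fun k _ => hAm k), hcov]

theorem forward_energy [Nonempty X] {K : X → X → ℝ}
    (hK : Continuous fun p : X × X => K p.1 p.2) (hsym : ∀ x y, K x y = K y x)
    (hpos : ∀ (N : ℕ) (z : Fin N → X) (c : Fin N → ℝ),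
      0 ≤ ∑ i, ∑ j, K (z i) (z j) * c i * c j)
    (μ ν : Measure X) [IsFiniteMeasure μ] [IsFiniteMeasure ν] :
    2 * (∫ x, ∫ y, K x y ∂ν ∂μ)
      ≤ (∫ x, ∫ y, K x y ∂μ ∂μ) + (∫ x, ∫ y, K x y ∂ν ∂ν) := by
  set Q : ℝ := (∫ x, ∫ y, K x y ∂μ ∂μ) + (∫ x, ∫ y, K x y ∂ν ∂ν)
    - 2 * (∫ x, ∫ y, K x y ∂ν ∂μ) with hQdef
  suffices h : 0 ≤ Q by linarith
  suffices h : ∀ ε : ℝ, 0 < ε → -ε ≤ Q by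
    by_contra hc
    push_neg at hc
    have := h (-Q / 2) (by linarith)
    linarith
  intro ε hε
  set M : ℝ := (μ univ).toReal + (ν univ).toReal with hMdef
  have hM0 : 0 ≤ M := by positivity
  have hden : (0:ℝ) < M * M + 1 := by nlinarith
  set ε' : ℝ := ε / (M * M + 1) with hε'def
  have hε'pos : 0 < ε' := div_pos hε hden
  -- uniform continuity
  have hKuc : UniformContinuous fun p : X × X => K p.1 p.2 :=
    CompactSpace.uniformContinuous_of_continuous hK
  obtain ⟨δ, hδpos, hδ⟩ := Metric.uniformContinuous_iff.mp hKuc ε' hε'pos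
  have hKud : ∀ p q : X × X, dist p q < δ → |K p.1 p.2 - K q.1 q.2| ≤ ε' := by
    intro p q hpq
    rw [← Real.dist_eq]
    exact (hδ hpq).le
  -- partition
  obtain ⟨n, w, A, hAm, hAsub, hdisj, hcov⟩ := partition_exists (X := X) δ hδpos
  set P : ℕ → ℝ := fun i => (μ (A i)).toReal with hPdef
  set R : ℕ → ℝ := fun i => (ν (A i)).toReal with hRdef
  have hP0 : ∀ i, 0 ≤ P i := fun i => ENNReal.toReal_nonneg
  have hR0 : ∀ i, 0 ≤ R i := fun i => ENNReal.toReal_nonneg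
  set KK : ℕ → ℕ → ℝ := fun i j => K (w i) (w j) with hKKdef
  -- positivity of the discrete quadratic form
  have hS0 : 0 ≤ ∑ i ∈ Finset.range n, ∑ j ∈ Finset.range n,
      KK i j * (P i - R i) * (P j - R j) := by
    have h0 := hpos n (fun i => w i) (fun i => P i - R i)
    have h1 : ∀ i : ℕ, (∑ j : Fin n, K (w i) (w (j : ℕ)) * (P i - R i) * (P (j:ℕ) - R (j:ℕ)))
        = ∑ j ∈ Finset.range n, KK i j * (P i - R i) * (P j - R j) :=
      fun i => Fin.sum_univ_eq_sum_range (fun k => KK i k * (P i - R i) * (P k - R k)) n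
    calc (0:ℝ) ≤ ∑ i : Fin n, ∑ j : Fin n,
          K (w (i:ℕ)) (w (j:ℕ)) * (P (i:ℕ) - R (i:ℕ)) * (P (j:ℕ) - R (j:ℕ)) := h0
      _ = ∑ i : Fin n, ∑ j ∈ Finset.range n, KK (i:ℕ) j * (P (i:ℕ) - R (i:ℕ)) * (P j - R j) := by
          exact Finset.sum_congr rfl fun i _ => h1 (i : ℕ)
      _ = ∑ i ∈ Finset.range n, ∑ j ∈ Finset.range n, KK i j * (P i - R i) * (P j - R j) :=
          Fin.sum_univ_eq_sum_range
            (fun i => ∑ j ∈ Finset.range n, KK i j * (P i - R i) * (P j - R j)) n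
  -- decompositions of the three double integrals
  have hIμμ := I_decomp hK μ μ n A hAm hdisj hcov
  have hIνν := I_decomp hK ν ν n A hAm hdisj hcov
  have hIμν := I_decomp hK μ ν n A hAm hdisj hcov
  set Iμμ : ℕ → ℕ → ℝ := fun i j => ∫ x, ∫ y, K x y ∂(μ.restrict (A j)) ∂(μ.restrict (A i))
  set Iνν : ℕ → ℕ → ℝ := fun i j => ∫ x, ∫ y, K x y ∂(ν.restrict (A j)) ∂(ν.restrict (A i))
  set Iμν : ℕ → ℕ → ℝ := fun i j => ∫ x, ∫ y, K x y ∂(ν.restrict (A j)) ∂(μ.restrict (A i))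
  have hQ : Q = ∑ i ∈ Finset.range n, ∑ j ∈ Finset.range n,
      (Iμμ i j + Iνν i j - 2 * Iμν i j) := by
    rw [hQdef, hIμμ, hIνν, hIμν, Finset.mul_sum]
    rw [← Finset.sum_add_distrib, ← Finset.sum_sub_distrib]
    refine Finset.sum_congr rfl fun i _ => ?_
    rw [Finset.mul_sum, ← Finset.sum_add_distrib, ← Finset.sum_sub_distrib]
  -- per-piece estimates
  have hest : ∀ i ∈ Finset.range n, ∀ j ∈ Finset.range n,
      |(Iμμ i j + Iνν i j - 2 * Iμν i j)
        - (KK i j * (P i * P j) + KK i j * (R i * R j) - 2 * (KK i j * (P i * R j)))|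
      ≤ ε' * (P i * P j) + ε' * (R i * R j) + 2 * (ε' * (P i * R j)) := by
    intro i _ j _
    have h1 : |Iμμ i j - KK i j * (P i * P j)| ≤ ε' * (P i * P j) := by
      simpa [mul_assoc] using
        piece_est hK hKud μ μ (hAm i) (hAm j) (hAsub i) (hAsub j)
    have h2 : |Iνν i j - KK i j * (R i * R j)| ≤ ε' * (R i * R j) := by
      simpa [mul_assoc] using
        piece_est hK hKud ν ν (hAm i) (hAm j) (hAsub i) (hAsub j)
    have h3 : |Iμν i j - KK i j * (P i * R j)| ≤ ε' * (P i * R j) := by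
      simpa [mul_assoc] using
        piece_est hK hKud μ ν (hAm i) (hAm j) (hAsub i) (hAsub j)
    have key : (Iμμ i j + Iνν i j - 2 * Iμν i j)
        - (KK i j * (P i * P j) + KK i j * (R i * R j) - 2 * (KK i j * (P i * R j)))
        = (Iμμ i j - KK i j * (P i * P j)) + (Iνν i j - KK i j * (R i * R j))
          + (-2) * (Iμν i j - KK i j * (P i * R j)) := by ring
    rw [key]
    calc |(Iμμ i j - KK i j * (P i * P j)) + (Iνν i j - KK i j * (R i * R j))
          + (-2) * (Iμν i j - KK i j * (P i * R j))|
        ≤ |Iμμ i j - KK i j * (P i * P j)| + |Iνν i j - KK i j * (R i * R j)|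
          + |(-2) * (Iμν i j - KK i j * (P i * R j))| := abs_add_three _ _ _
      _ ≤ ε' * (P i * P j) + ε' * (R i * R j) + 2 * (ε' * (P i * R j)) := by
          rw [abs_mul]
          have : |(-2 : ℝ)| = 2 := by norm_num
          rw [this]
          linarith
  -- sum all errors
  set S' : ℝ := ∑ i ∈ Finset.range n, ∑ j ∈ Finset.range n,
    (KK i j * (P i * P j) + KK i j * (R i * R j) - 2 * (KK i j * (P i * R j))) with hS'def
  have hQS' : |Q - S'| ≤ ε' * (M * M) := by
    have hMμ : ∑ k ∈ Finset.range n, P k = (μ univ).toReal := mass_sum μ n A hAm hdisj hcov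
    have hMν : ∑ k ∈ Finset.range n, R k = (ν univ).toReal := mass_sum ν n A hAm hdisj hcov
    have step : |Q - S'| ≤ ∑ i ∈ Finset.range n, ∑ j ∈ Finset.range n,
        (ε' * (P i * P j) + ε' * (R i * R j) + 2 * (ε' * (P i * R j))) := by
      rw [hQ, hS'def, ← Finset.sum_sub_distrib]
      refine (Finset.abs_sum_le_sum_abs _ _).trans (Finset.sum_le_sum fun i hi => ?_)
      rw [← Finset.sum_sub_distrib]
      exact (Finset.abs_sum_le_sum_abs _ _).trans (Finset.sum_le_sum fun j hj => hest i hi j hj)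
    refine step.trans ?_
    have e1 : ∑ i ∈ Finset.range n, ∑ j ∈ Finset.range n, ε' * (P i * P j)
        = ε' * ((∑ i ∈ Finset.range n, P i) * (∑ j ∈ Finset.range n, P j)) := by
      rw [Finset.sum_mul_sum]; simp_rw [Finset.mul_sum]
    have e2 : ∑ i ∈ Finset.range n, ∑ j ∈ Finset.range n, ε' * (R i * R j)
        = ε' * ((∑ i ∈ Finset.range n, R i) * (∑ j ∈ Finset.range n, R j)) := by
      rw [Finset.sum_mul_sum]; simp_rw [Finset.mul_sum]
    have e3 : ∑ i ∈ Finset.range n, ∑ j ∈ Finset.range n, 2 * (ε' * (P i * R j))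
        = 2 * (ε' * ((∑ i ∈ Finset.range n, P i) * (∑ j ∈ Finset.range n, R j))) := by
      rw [Finset.sum_mul_sum]; simp_rw [Finset.mul_sum]
    have expand : ∑ i ∈ Finset.range n, ∑ j ∈ Finset.range n,
        (ε' * (P i * P j) + ε' * (R i * R j) + 2 * (ε' * (P i * R j)))
        = ε' * ((∑ i ∈ Finset.range n, P i) * (∑ j ∈ Finset.range n, P j))
          + ε' * ((∑ i ∈ Finset.range n, R i) * (∑ j ∈ Finset.range n, R j))
          + 2 * (ε' * ((∑ i ∈ Finset.range n, P i) * (∑ j ∈ Finset.range n, R j))) := by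
      rw [← e1, ← e2, ← e3]
      simp only [Finset.sum_add_distrib]
    rw [expand, hMμ, hMν, hMdef]
    nlinarith [ENNReal.toReal_nonneg (a := μ univ), ENNReal.toReal_nonneg (a := ν univ),
      hε'pos.le]
  -- S' equals the discrete quadratic form
  have hS'S : S' = ∑ i ∈ Finset.range n, ∑ j ∈ Finset.range n,
      KK i j * (P i - R i) * (P j - R j) := by
    have hswap : ∑ i ∈ Finset.range n, ∑ j ∈ Finset.range n, KK i j * (R i * P j)
        = ∑ i ∈ Finset.range n, ∑ j ∈ Finset.range n, KK i j * (P i * R j) := by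
      rw [Finset.sum_comm]
      refine Finset.sum_congr rfl fun i _ => Finset.sum_congr rfl fun j _ => ?_
      rw [hKKdef]
      simp only
      rw [hsym]
      ring
    have : S' - ∑ i ∈ Finset.range n, ∑ j ∈ Finset.range n,
        KK i j * (P i - R i) * (P j - R j)
        = (∑ i ∈ Finset.range n, ∑ j ∈ Finset.range n, KK i j * (R i * P j))
          - ∑ i ∈ Finset.range n, ∑ j ∈ Finset.range n, KK i j * (P i * R j) := by
      rw [hS'def, ← Finset.sum_sub_distrib, ← Finset.sum_sub_distrib]
      refine Finset.sum_congr rfl fun i _ => ?_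
      rw [← Finset.sum_sub_distrib, ← Finset.sum_sub_distrib]
      exact Finset.sum_congr rfl fun j _ => by ring
    have h0 : S' - ∑ i ∈ Finset.range n, ∑ j ∈ Finset.range n,
        KK i j * (P i - R i) * (P j - R j) = 0 := by rw [this, hswap, sub_self]
    linarith
  -- conclude
  have hεbound : ε' * (M * M) ≤ ε := by
    rw [hε'def]
    rw [div_mul_eq_mul_div, div_le_iff₀ hden]
    nlinarith
  have h1 := (abs_le.mp hQS').1
  have h2 : 0 ≤ S' := by rw [hS'S]; exact hS0
  linarith

end Aux

section Aux2
open BoundedContinuousFunction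

variable {X : Type*} [MetricSpace X] [CompactSpace X]
  [MeasurableSpace X] [OpensMeasurableSpace X]

lemma cont_integrable' (μ : Measure X) [IsFiniteMeasure μ] {f : X → ℝ} (hf : Continuous f) :
    Integrable f μ := by
  obtain ⟨C, hC⟩ : ∃ C, ∀ x, |f x| ≤ C :=
    ⟨‖mkOfCompact ⟨f, hf⟩‖, fun x => by simpa using (mkOfCompact ⟨f, hf⟩).norm_coe_le_norm x⟩
  exact (integrable_const C).mono' hf.aestronglyMeasurable (ae_of_all _ fun x => by
    simpa using hC x)

lemma finite_dirac_comb {N : ℕ} (z : Fin N → X) (a : Fin N → ℝ) :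
    IsFiniteMeasure (∑ i, ENNReal.ofReal (a i) • Measure.dirac (z i)) := by
  constructor
  rw [Measure.coe_finset_sum, Finset.sum_apply]
  refine ENNReal.sum_lt_top.mpr fun i _ => ?_
  rw [Measure.smul_apply, smul_eq_mul]
  exact ENNReal.mul_lt_top ENNReal.ofReal_lt_top (by simp)

lemma integral_dirac_comb {N : ℕ} (z : Fin N → X) (a : Fin N → ℝ) (ha : ∀ i, 0 ≤ a i)
    {f : X → ℝ} (hf : Continuous f) :
    ∫ x, f x ∂(∑ i, ENNReal.ofReal (a i) • Measure.dirac (z i)) = ∑ i, a i * f (z i) := by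
  rw [integral_finset_sum_measure (fun i _ => ?_)]
  · refine Finset.sum_congr rfl fun i _ => ?_
    rw [integral_smul_measure, integral_dirac, smul_eq_mul, ENNReal.toReal_ofReal (ha i)]
  · haveI : IsFiniteMeasure (ENNReal.ofReal (a i) • Measure.dirac (z i)) := by
      constructor
      rw [Measure.smul_apply, smul_eq_mul]
      exact ENNReal.mul_lt_top ENNReal.ofReal_lt_top (by simp)
    exact cont_integrable' _ hf

theorem backward_energy {K : X → X → ℝ}
    (hK : Continuous fun p : X × X => K p.1 p.2) (hsym : ∀ x y, K x y = K y x)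
    (hmeas : ∀ μ ν : Measure X, IsFiniteMeasure μ → IsFiniteMeasure ν →
      2 * (∫ x, ∫ y, K x y ∂ν ∂μ)
        ≤ (∫ x, ∫ y, K x y ∂μ ∂μ) + (∫ x, ∫ y, K x y ∂ν ∂ν))
    (N : ℕ) (z : Fin N → X) (c : Fin N → ℝ) :
    0 ≤ ∑ i, ∑ j, K (z i) (z j) * c i * c j := by
  set p : Fin N → ℝ := fun i => max (c i) 0 with hpdef
  set q : Fin N → ℝ := fun i => max (-c i) 0 with hqdef
  have hp0 : ∀ i, 0 ≤ p i := fun i => le_max_right _ _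
  have hq0 : ∀ i, 0 ≤ q i := fun i => le_max_right _ _
  have hc : ∀ i, c i = p i - q i := by
    intro i
    rw [hpdef, hqdef]
    simp only
    rcases le_total 0 (c i) with h | h
    · rw [max_eq_left h, max_eq_right (by linarith : -c i ≤ 0)]; ring
    · rw [max_eq_right h, max_eq_left (by linarith : (0:ℝ) ≤ -c i)]; ring
  set μ : Measure X := ∑ i, ENNReal.ofReal (p i) • Measure.dirac (z i) with hμdef
  set ν : Measure X := ∑ i, ENNReal.ofReal (q i) • Measure.dirac (z i) with hνdef
  haveI : IsFiniteMeasure μ := finite_dirac_comb z p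
  haveI : IsFiniteMeasure ν := finite_dirac_comb z q
  have hKx : ∀ x, Continuous fun y => K x y := fun x => hK.comp (Continuous.prodMk_right x)
  have hKcy : ∀ (a : Fin N → ℝ), Continuous fun x => ∑ j, a j * K x (z j) := by
    intro a
    exact continuous_finset_sum _ fun j _ =>
      continuous_const.mul (hK.comp (continuous_id.prodMk continuous_const))
  -- compute the three double integrals
  have hI : ∀ (a b : Fin N → ℝ), (∀ i, 0 ≤ a i) → (∀ i, 0 ≤ b i) →
      (∫ x, ∫ y, K x y ∂(∑ i, ENNReal.ofReal (b i) • Measure.dirac (z i))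
        ∂(∑ i, ENNReal.ofReal (a i) • Measure.dirac (z i)))
      = ∑ i, a i * ∑ j, b j * K (z i) (z j) := by
    intro a b ha hb
    have hinner : ∀ x, ∫ y, K x y ∂(∑ i, ENNReal.ofReal (b i) • Measure.dirac (z i))
        = ∑ j, b j * K x (z j) := fun x => integral_dirac_comb z b hb (hKx x)
    simp_rw [hinner]
    exact integral_dirac_comb z a ha (hKcy b)
  have hineq := hmeas μ ν inferInstance inferInstance
  rw [hμdef, hνdef] at hineq
  rw [hI p p hp0 hp0, hI q q hq0 hq0, hI p q hp0 hq0] at hineq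
  -- convert to double-sum form
  have conv : ∀ (a b : Fin N → ℝ), (∑ i, a i * ∑ j, b j * K (z i) (z j))
      = ∑ i, ∑ j, K (z i) (z j) * a i * b j := by
    intro a b
    refine Finset.sum_congr rfl fun i _ => ?_
    rw [Finset.mul_sum]
    exact Finset.sum_congr rfl fun j _ => by ring
  rw [conv p p, conv q q, conv p q] at hineq
  have hswap : (∑ i, ∑ j, K (z i) (z j) * q i * p j)
      = ∑ i, ∑ j, K (z i) (z j) * p i * q j := by
    rw [Finset.sum_comm]
    refine Finset.sum_congr rfl fun i _ => Finset.sum_congr rfl fun j _ => ?_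
    rw [hsym]; ring
  have hgoal : (∑ i, ∑ j, K (z i) (z j) * c i * c j)
      = (∑ i, ∑ j, K (z i) (z j) * p i * p j) + (∑ i, ∑ j, K (z i) (z j) * q i * q j)
        - (∑ i, ∑ j, K (z i) (z j) * p i * q j) - (∑ i, ∑ j, K (z i) (z j) * q i * p j) := by
    calc (∑ i, ∑ j, K (z i) (z j) * c i * c j)
        = ∑ i, ∑ j, (K (z i) (z j) * p i * p j + K (z i) (z j) * q i * q j
            - K (z i) (z j) * p i * q j - K (z i) (z j) * q i * p j) := by
          refine Finset.sum_congr rfl fun i _ => Finset.sum_congr rfl fun j _ => ?_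
          rw [hc i, hc j]; ring
      _ = (∑ i, ∑ j, K (z i) (z j) * p i * p j) + (∑ i, ∑ j, K (z i) (z j) * q i * q j)
          - (∑ i, ∑ j, K (z i) (z j) * p i * q j)
          - (∑ i, ∑ j, K (z i) (z j) * q i * p j) := by
          simp only [Finset.sum_sub_distrib, Finset.sum_add_distrib]
  rw [hgoal, hswap]
  linarith

end Aux2

lemma sphere_norm_coe {d : ℕ} (x : Sphere d) : ‖(x : EuclideanSpace ℝ (Fin (d+1)))‖ = 1 := by
  simpa using mem_sphere_zero_iff_norm.mp x.2

lemma ip_cont (d : ℕ) : Continuous (fun p : Sphere d × Sphere d => ip p.1 p.2) := by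
  apply Continuous.inner
  · exact continuous_subtype_val.comp continuous_fst
  · exact continuous_subtype_val.comp continuous_snd

lemma ip_mem (d : ℕ) (x y : Sphere d) : ip x y ∈ Set.Icc (-1:ℝ) 1 := by
  have h := abs_real_inner_le_norm (x : EuclideanSpace ℝ (Fin (d+1)))
    (y : EuclideanSpace ℝ (Fin (d+1)))
  rw [sphere_norm_coe, sphere_norm_coe, mul_one] at h
  exact abs_le.mp h

instance sphere_nonempty_inst (d : ℕ) : Nonempty (Sphere d) :=
  (NormedSpace.sphere_nonempty.mpr zero_le_one).to_subtype

/-- A continuous function `F` on `[-1,1]` is positive definite on `S^d` if and only if for every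
pair of finite Borel measures `μ, ν` on `S^d` one has
`2 ∬ F(x·y) dμ dν ≤ I_F(μ) + I_F(ν)`, i.e. the energy of every finite signed measure `μ - ν`
is non-negative. -/
theorem positive_definite_iff_signed_energy_nonneg (d : ℕ) (hd : 1 ≤ d)
    (F : ℝ → ℝ) (hF : ContinuousOn F (Set.Icc (-1 : ℝ) 1)) :
    (∀ (N : ℕ) (z : Fin N → Sphere d) (c : Fin N → ℝ),
        0 ≤ ∑ i, ∑ j, F (ip (z i) (z j)) * c i * c j)
    ↔ (∀ μ ν : Measure (Sphere d), IsFiniteMeasure μ → IsFiniteMeasure ν →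
        2 * (∫ x, ∫ y, F (ip x y) ∂ν ∂μ)
          ≤ (∫ x, ∫ y, F (ip x y) ∂μ ∂μ) + (∫ x, ∫ y, F (ip x y) ∂ν ∂ν)) := by
  have hKc : Continuous fun p : Sphere d × Sphere d => F (ip p.1 p.2) :=
    hF.comp_continuous (ip_cont d) fun p => ip_mem d p.1 p.2
  have hsym : ∀ x y : Sphere d, F (ip x y) = F (ip y x) := fun x y => by
    unfold ip; rw [real_inner_comm]
  constructor
  · intro hpos μ ν hμ hν
    haveI := hμ; haveI := hν
    exact forward_energy hKc hsym hpos μ ν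
  · intro hmeas N z c
    exact backward_energy hKc hsym (fun μ ν hμ hν => by
      haveI := hμ; haveI := hν; exact hmeas μ ν hμ hν) N z c
end
end

section
/- Let d ≥ 1 and let F ∈ C[−1,1] satisfy I_F(σ) ≥ 0. Assume that σ is a minimizer of I_F over all Borel probability measures on S^d, i.e., I_F(μ) ≥ I_F(σ) for every Borel probability measure μ on S^d. Then for every pair of finite Borel measures μ₊, μ₋ on S^d with μ₊(S^d) = μ₋(S^d), the signed measure γ = μ₊ − μ₋ (which has total mass zero) has non-negative energy: I_F(μ₊) + I_F(μ₋) − 2 ∬_{S^d×S^d} F(x·y) dμ₊(x)dμ₋(y) ≥ 0. -/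
open MeasureTheory Metric Set
open scoped RealInnerProductSpace ENNReal

noncomputable section

section Aux

open scoped Pointwise

variable {d : ℕ}
local notation "E" => EuclideanSpace ℝ (Fin (d + 1))
local notation "σ" => sphereMeasure d

lemma SphereEnergy.ip_symm (x y : Sphere d) : ip x y = ip y x := real_inner_comm _ _

lemma SphereEnergy.ip_self (z : Sphere d) : ip z z = 1 := by
  show ⟪(z:E), (z:E)⟫ = 1
  rw [real_inner_self_eq_norm_sq, mem_sphere_zero_iff_norm.1 z.2]; norm_num

lemma SphereEnergy.ip_mem_Icc (x y : Sphere d) : ip x y ∈ Set.Icc (-1:ℝ) 1 := by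
  have hx := mem_sphere_zero_iff_norm.1 x.2
  have hy := mem_sphere_zero_iff_norm.1 y.2
  have h := abs_real_inner_le_norm (x : E) y
  rw [hx, hy, mul_one] at h
  exact abs_le.1 h

lemma SphereEnergy.continuous_ip2 : Continuous (fun p : Sphere d × Sphere d => ip p.1 p.2) :=
  Continuous.inner (continuous_subtype_val.comp continuous_fst)
    (continuous_subtype_val.comp continuous_snd)

lemma SphereEnergy.continuous_ip (x : Sphere d) : Continuous (fun z : Sphere d => ip x z) :=
  Continuous.inner continuous_const continuous_subtype_val

lemma SphereEnergy.measurableSet_cap (x : Sphere d) (t : ℝ) : MeasurableSet (cap x t) :=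
  measurableSet_lt measurable_const (SphereEnergy.continuous_ip x).measurable

namespace SphereEnergy

/-- map on the sphere induced by a linear isometry equivalence -/
def sMap (R : EuclideanSpace ℝ (Fin (d+1)) ≃ₗᵢ[ℝ] EuclideanSpace ℝ (Fin (d+1)))
    (z : Sphere d) : Sphere d :=
  ⟨R z, by simpa [mem_sphere_zero_iff_norm] using mem_sphere_zero_iff_norm.1 z.2⟩

lemma continuous_sMap (R : E ≃ₗᵢ[ℝ] E) : Continuous (sMap R) :=
  Continuous.subtype_mk (R.continuous.comp continuous_subtype_val) _

lemma sMap_image_coe (R : E ≃ₗᵢ[ℝ] E) (s : Set (Sphere d)) :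
    ((↑) '' (sMap R ⁻¹' s) : Set E) = R ⁻¹' ((↑) '' s) := by
  ext v
  constructor
  · rintro ⟨z, hz, rfl⟩
    exact ⟨sMap R z, hz, rfl⟩
  · rintro hv
    obtain ⟨w, hw, hwv⟩ := hv
    have hv1 : v ∈ Metric.sphere (0:E) 1 := by
      rw [mem_sphere_zero_iff_norm]
      have h2 : ‖R v‖ = 1 := by rw [← hwv]; exact mem_sphere_zero_iff_norm.1 w.2
      simpa using h2
    refine ⟨⟨v, hv1⟩, ?_, rfl⟩
    show sMap R ⟨v, hv1⟩ ∈ s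
    have : sMap R ⟨v, hv1⟩ = w := Subtype.ext hwv.symm
    rwa [this]

lemma smul_preimage (R : E ≃ₗᵢ[ℝ] E) (A : Set E) :
    Set.Ioo (0:ℝ) 1 • (R ⁻¹' A) = R ⁻¹' (Set.Ioo (0:ℝ) 1 • A) := by
  ext v
  simp only [Set.mem_smul, Set.mem_preimage]
  constructor
  · rintro ⟨r, hr, a, ha, rfl⟩
    refine ⟨r, hr, R a, ha, ?_⟩
    rw [_root_.map_smul]
  · rintro ⟨r, hr, a, ha, hra⟩
    refine ⟨r, hr, R.symm a, by simpa using ha, ?_⟩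
    apply R.injective
    rw [_root_.map_smul]
    simpa using hra

lemma map_sMap_toSphere (R : E ≃ₗᵢ[ℝ] E) :
    Measure.map (sMap R) (volume : Measure E).toSphere = (volume : Measure E).toSphere := by
  ext s hs
  rw [Measure.map_apply ((continuous_sMap R).measurable) hs,
    Measure.toSphere_apply' _ hs, Measure.toSphere_apply' _ ((continuous_sMap R).measurable hs),
    sMap_image_coe, smul_preimage]
  congr 1
  have h : (volume : Measure E) (R ⁻¹' (Set.Ioo (0:ℝ) 1 • ((↑) '' s))) =
      (Measure.map R (volume : Measure E)) (Set.Ioo (0:ℝ) 1 • ((↑) '' s)) :=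
    ((R.toMeasurableEquiv).map_apply _).symm
  rw [h, R.measurePreserving.map_eq]

lemma map_sMap_sphereMeasure (R : E ≃ₗᵢ[ℝ] E) :
    Measure.map (sMap R) (sphereMeasure d) = sphereMeasure d := by
  rw [sphereMeasure, Measure.map_smul, map_sMap_toSphere]

lemma toSphere_univ_pos : 0 < (volume : Measure E).toSphere univ := by
  rw [Measure.toSphere_apply_univ]
  have h1 : (0:ℝ≥0∞) < Module.finrank ℝ E := by
    have : 0 < Module.finrank ℝ E := Module.finrank_pos
    exact_mod_cast this
  exact ENNReal.mul_pos h1.ne' (measure_ball_pos _ _ one_pos).ne'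

instance : IsProbabilityMeasure (sphereMeasure d) := by
  constructor
  rw [sphereMeasure, Measure.smul_apply, smul_eq_mul]
  exact ENNReal.inv_mul_cancel toSphere_univ_pos.ne' (measure_ne_top _ _)

instance : Nonempty (Sphere d) :=
  Set.Nonempty.to_subtype (NormedSpace.sphere_nonempty.2 zero_le_one)

lemma exists_rot (x y : Sphere d) : ∃ R : E ≃ₗᵢ[ℝ] E, R x = y := by
  refine ⟨Submodule.reflection (ℝ ∙ ((x:E) - y))ᗮ, Submodule.reflection_sub ?_⟩
  rw [mem_sphere_zero_iff_norm.1 x.2, mem_sphere_zero_iff_norm.1 y.2]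

lemma sMap_symm_preimage_cap (R : E ≃ₗᵢ[ℝ] E) (x : Sphere d) (t : ℝ) :
    sMap R.symm ⁻¹' (cap x t) = cap (sMap R x) t := by
  ext z
  simp only [Set.mem_preimage, cap, Set.mem_setOf_eq]
  have h : ip x (sMap R.symm z) = ip (sMap R x) z := by
    show (inner ℝ (x:E) (R.symm (z:E)) : ℝ) = inner ℝ (R (x:E)) (z:E)
    rw [← R.inner_map_map (x:E) (R.symm (z:E)), R.apply_symm_apply]
  rw [h]

lemma cap_const (x y : Sphere d) (t : ℝ) : σ (cap x t) = σ (cap y t) := by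
  obtain ⟨R, hR⟩ := exists_rot x y
  have hy' : sMap R x = y := Subtype.ext hR
  have h1 : σ (cap y t) = σ (sMap R.symm ⁻¹' (cap x t)) := by
    rw [sMap_symm_preimage_cap, hy']
  rw [h1, ← Measure.map_apply (continuous_sMap R.symm).measurable (measurableSet_cap x t),
    map_sMap_sphereMeasure]

lemma cap_pos (x : Sphere d) {t : ℝ} (ht : t < 1) : 0 < σ (cap x t) := by
  rcases eq_or_ne (σ (cap x t)) 0 with h0 | h0
  · exfalso
    have hcov : (Set.univ : Set (Sphere d)) ⊆ ⋃ z : Sphere d, cap z t := fun z _ =>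
      Set.mem_iUnion.2 ⟨z, show t < ip z z by rw [ip_self]; exact ht⟩
    obtain ⟨s, hs⟩ := isCompact_univ.elim_finite_subcover (fun z : Sphere d => cap z t)
      (fun z => isOpen_lt continuous_const (continuous_ip z)) hcov
    have h2 : σ (Set.univ : Set (Sphere d)) = 0 := by
      refine measure_mono_null hs ?_
      refine (measure_biUnion_null_iff s.countable_toSet).2 fun z _ => ?_
      rw [cap_const z x]; exact h0
    simp [measure_univ] at h2
  · exact lt_of_le_of_ne (zero_le) (Ne.symm h0)

lemma pot_const {f : ℝ → ℝ} (hf : Continuous (fun p : Sphere d × Sphere d => f (ip p.1 p.2)))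
    (y y' : Sphere d) : ∫ x, f (ip x y) ∂σ = ∫ x, f (ip x y') ∂σ := by
  obtain ⟨R, hR⟩ := exists_rot y y'
  have hy' : sMap R y = y' := Subtype.ext hR
  have h1 : ∫ x, f (ip x y') ∂σ = ∫ x, f (ip x y') ∂(Measure.map (sMap R) σ) := by
    rw [map_sMap_sphereMeasure]
  rw [h1, integral_map (continuous_sMap R).measurable.aemeasurable]
  · congr 1
    ext x
    congr 1
    rw [← hy']
    show ⟪(x:E), (y:E)⟫ = ⟪R x, R y⟫
    rw [R.inner_map_map]
  · exact (hf.comp (continuous_id.prodMk continuous_const)).aestronglyMeasurable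

lemma pot_eq {f : ℝ → ℝ} (hf : Continuous (fun p : Sphere d × Sphere d => f (ip p.1 p.2)))
    (x : Sphere d) : ∫ y, f (ip x y) ∂σ = ∫ u, ∫ y, f (ip u y) ∂σ ∂σ := by
  have hsymm : Continuous (fun p : Sphere d × Sphere d => f (ip p.2 p.1)) :=
    hf.comp continuous_swap
  have h1 : ∀ u v : Sphere d, ∫ y, f (ip u y) ∂σ = ∫ y, f (ip v y) ∂σ := by
    intro u v
    have e1 : ∫ y, f (ip u y) ∂σ = ∫ y, f (ip y u) ∂σ := by
      congr 1; ext y; rw [ip_symm]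
    have e2 : ∫ y, f (ip v y) ∂σ = ∫ y, f (ip y v) ∂σ := by
      congr 1; ext y; rw [ip_symm]
    rw [e1, e2, pot_const hf]
  calc ∫ y, f (ip x y) ∂σ
      = ∫ u, ∫ y, f (ip x y) ∂σ ∂σ := by
        rw [integral_const]; simp
    _ = ∫ u, ∫ y, f (ip u y) ∂σ ∂σ := integral_congr_ae (ae_of_all _ fun u => (h1 x u))

lemma abs_mul_le {x y X Y : ℝ} (hx : |x| ≤ X) (hy : |y| ≤ Y) : |x * y| ≤ X * Y := by
  rw [abs_mul]
  exact mul_le_mul hx hy (abs_nonneg _) (le_trans (abs_nonneg _) hx)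

/-- bounded measurable real functions on finite measure spaces are integrable -/
lemma bdd_int {α : Type*} [MeasurableSpace α] {μ : Measure α} [IsFiniteMeasure μ]
    {f : α → ℝ} (hm : AEStronglyMeasurable f μ) {M : ℝ} (hb : ∀ x, |f x| ≤ M) :
    Integrable f μ :=
  ⟨hm, HasFiniteIntegral.of_bounded (C := M)
    (ae_of_all _ (fun x => by simpa [Real.norm_eq_abs] using hb x))⟩

end SphereEnergy

end Aux

section Core

open SphereEnergy

variable {d : ℕ}
local notation "E" => EuclideanSpace ℝ (Fin (d + 1))
local notation "σ" => sphereMeasure d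

set_option maxHeartbeats 2000000 in
theorem SphereEnergy.core (F : ℝ → ℝ) (hF : ContinuousOn F (Set.Icc (-1 : ℝ) 1))
    (hmin : ∀ μ : Measure (Sphere d), IsProbabilityMeasure μ →
        (∫ x, ∫ y, F (ip x y) ∂σ ∂σ) ≤ ∫ x, ∫ y, F (ip x y) ∂μ ∂μ)
    (a b : Measure (Sphere d)) [IsProbabilityMeasure a] [IsProbabilityMeasure b] :
    2 * (∫ x, ∫ y, F (ip x y) ∂b ∂a)
      ≤ (∫ x, ∫ y, F (ip x y) ∂a ∂a) + (∫ x, ∫ y, F (ip x y) ∂b ∂b) := by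
  classical
  -- the kernel
  have hG : Continuous (fun p : Sphere d × Sphere d => F (ip p.1 p.2)) :=
    hF.comp_continuous continuous_ip2 (fun p => ip_mem_Icc p.1 p.2)
  set G : Sphere d × Sphere d → ℝ := fun p => F (ip p.1 p.2) with hGdef
  have hGmeas : Measurable G := hG.measurable
  obtain ⟨M, hM⟩ : ∃ M, ∀ p : Sphere d × Sphere d, |G p| ≤ M := by
    obtain ⟨M, hM⟩ := isCompact_univ.exists_bound_of_continuousOn hG.continuousOn
    exact ⟨M, fun p => by simpa [Real.norm_eq_abs] using hM p (Set.mem_univ p)⟩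
  have hM0 : 0 ≤ M := le_trans (abs_nonneg _) (hM (Classical.arbitrary _))
  set s₀ := ∫ x, ∫ y, F (ip x y) ∂σ ∂σ with hs₀def
  -- the potential is constant
  have hpotx : ∀ x : Sphere d, ∫ y, G (x, y) ∂σ = s₀ := fun x => pot_eq hG x
  have hpoty : ∀ y : Sphere d, ∫ x, G (x, y) ∂σ = s₀ := by
    intro y
    have e : ∫ x, G (x, y) ∂σ = ∫ x, G (y, x) ∂σ := by
      apply integral_congr_ae (ae_of_all _ fun x => ?_)
      show F (ip x y) = F (ip y x)
      rw [ip_symm]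
    rw [e]; exact hpotx y
  -- energies as product integrals
  have hGint : ∀ (μ ν : Measure (Sphere d)) [IsFiniteMeasure μ] [IsFiniteMeasure ν],
      Integrable G (μ.prod ν) := fun μ ν _ _ => bdd_int hG.aestronglyMeasurable hM
  have hEp : ∀ (μ ν : Measure (Sphere d)) [IsFiniteMeasure μ] [IsFiniteMeasure ν],
      ∫ x, ∫ y, F (ip x y) ∂ν ∂μ = ∫ q, G q ∂(μ.prod ν) := by
    intro μ ν _ _
    exact (integral_prod G (hGint μ ν)).symm
  rw [hEp a b, hEp a a, hEp b b]
  refine le_of_forall_pos_le_add ?_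
  intro ε hε
  set η := ε / 4 with hηdef
  have hη0 : 0 < η := by positivity
  -- uniform continuity
  obtain ⟨δ, hδ0, hδ⟩ := Metric.uniformContinuous_iff.1
    (CompactSpace.uniformContinuous_of_continuous hG) η hη0
  -- the cap parameter
  set t : ℝ := 1 - min (δ ^ 2 / 8) 2⁻¹ with htdef
  have ht1 : t < 1 := by
    have h0 : (0:ℝ) < min (δ ^ 2 / 8) 2⁻¹ := lt_min (by positivity) (by norm_num)
    rw [htdef]; linarith
  have hcap : ∀ u x : Sphere d, x ∈ cap u t → dist x u < δ := by
    intro u x hx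
    have hxu : t < ip u x := hx
    have h1 : dist x u ^ 2 = ‖(x : EuclideanSpace ℝ (Fin (d+1))) - (u : EuclideanSpace ℝ (Fin (d+1)))‖ ^ 2 := by
      rw [Subtype.dist_eq, dist_eq_norm]
    have h2 : ‖(x : EuclideanSpace ℝ (Fin (d+1))) - (u : EuclideanSpace ℝ (Fin (d+1)))‖ ^ 2
        = 2 - 2 * ip u x := by
      rw [norm_sub_sq_real, mem_sphere_zero_iff_norm.1 x.2, mem_sphere_zero_iff_norm.1 u.2]
      have e : ⟪(x : EuclideanSpace ℝ (Fin (d+1))), (u : EuclideanSpace ℝ (Fin (d+1)))⟫ = ip u x :=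
        real_inner_comm _ _
      rw [e]; ring
    have h4 : 2 - 2 * t ≤ δ ^ 2 / 4 := by
      have := min_le_left (δ ^ 2 / 8) 2⁻¹
      rw [htdef]; linarith
    have hnorm : dist x u ^ 2 < δ ^ 2 := by
      rw [h1, h2]
      have h5 : 2 - 2 * ip u x < 2 - 2 * t := by linarith
      have h6 : (0:ℝ) < δ ^ 2 := pow_pos hδ0 2
      have h7 : 2 - 2 * ip u x < δ ^ 2 / 4 := lt_of_lt_of_le h5 h4
      have h8 : δ ^ 2 / 4 < δ ^ 2 := by linarith
      exact lt_trans h7 h8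
    exact lt_of_pow_lt_pow_left₀ 2 hδ0.le hnorm
  have hpair : ∀ p q : Sphere d × Sphere d, p.1 ∈ cap q.1 t → p.2 ∈ cap q.2 t →
      |G p - G q| ≤ η := by
    intro p q h1 h2
    have hdpq : dist p q < δ := by
      rw [Prod.dist_eq]
      exact max_lt (hcap _ _ h1) (hcap _ _ h2)
    have := hδ hdpq
    rw [Real.dist_eq] at this
    exact this.le
  -- the cap measure constant
  set c : ℝ := (σ (cap (Classical.arbitrary (Sphere d)) t)).toReal with hcdef
  have hc : 0 < c :=
    ENNReal.toReal_pos (cap_pos _ ht1).ne' (measure_ne_top _ _)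
  have hcinv : (0:ℝ) ≤ c⁻¹ := by positivity
  have hcapconst : ∀ z : Sphere d, (σ (cap z t)).toReal = c := by
    intro z; rw [hcdef, cap_const z (Classical.arbitrary _)]
  -- indicator kernel
  set D : Set (Sphere d × Sphere d) := {r | t < ip r.1 r.2} with hDdef
  have hDmeas : MeasurableSet D := measurableSet_lt measurable_const continuous_ip2.measurable
  set ind : Sphere d × Sphere d → ℝ := D.indicator (fun _ => 1) with hinddef
  have hindmeas : Measurable ind := measurable_const.indicator hDmeas
  have hindbd : ∀ r, |ind r| ≤ 1 := by
    intro r; rw [hinddef, Set.indicator_apply]; split_ifs <;> simp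
  have hindnn : ∀ r, 0 ≤ ind r := by
    intro r; rw [hinddef, Set.indicator_apply]; split_ifs <;> norm_num
  have ind_left : ∀ z u : Sphere d, ind (z, u) = (cap z t).indicator (fun _ => (1:ℝ)) u := by
    intro z u
    by_cases hzu : t < ip z u
    · rw [hinddef, Set.indicator_of_mem (show (z,u) ∈ D from hzu),
        Set.indicator_of_mem (show u ∈ cap z t from hzu)]
    · rw [hinddef, Set.indicator_of_notMem (show (z,u) ∉ D from hzu),
        Set.indicator_of_notMem (show u ∉ cap z t from hzu)]
  have ind_right : ∀ z u : Sphere d, ind (z, u) = (cap u t).indicator (fun _ => (1:ℝ)) z := by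
    intro z u
    by_cases hzu : t < ip z u
    · have h2 : t < ip u z := by rw [ip_symm]; exact hzu
      rw [hinddef, Set.indicator_of_mem (show (z,u) ∈ D from hzu),
        Set.indicator_of_mem (show z ∈ cap u t from h2)]
    · have h2 : ¬ t < ip u z := by rw [ip_symm]; exact hzu
      rw [hinddef, Set.indicator_of_notMem (show (z,u) ∉ D from hzu),
        Set.indicator_of_notMem (show z ∉ cap u t from h2)]
  -- densities
  set dens : Measure (Sphere d) → Sphere d → ℝ :=
    fun μ z => c⁻¹ * (μ (cap z t)).toReal with hdensdef
  have hdensmeas : ∀ (ρ : Measure (Sphere d)) [SFinite ρ], Measurable (dens ρ) := by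
    intro ρ _
    exact ((measurable_measure_prodMk_left (ν := ρ) hDmeas).ennreal_toReal).const_mul _
  have hdensbd : ∀ (ρ : Measure (Sphere d)) [IsProbabilityMeasure ρ], ∀ z : Sphere d,
      0 ≤ dens ρ z ∧ dens ρ z ≤ c⁻¹ := by
    intro ρ _ z
    have h1 : (ρ (cap z t)).toReal ≤ 1 := by
      simpa using ENNReal.toReal_mono ENNReal.one_ne_top prob_le_one
    have h2 : 0 ≤ (ρ (cap z t)).toReal := ENNReal.toReal_nonneg
    constructor
    · rw [hdensdef]; positivity
    · rw [hdensdef]; nlinarith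
  have hdensabs : ∀ (ρ : Measure (Sphere d)) [IsProbabilityMeasure ρ], ∀ z : Sphere d,
      |dens ρ z| ≤ c⁻¹ := by
    intro ρ _ z
    rw [abs_le]
    exact ⟨by linarith [(hdensbd ρ z).1, hcinv], (hdensbd ρ z).2⟩
  -- `gen`: indicator integrals
  have gen : ∀ (ρ : Measure (Sphere d)) [IsFiniteMeasure ρ], ∀ z : Sphere d,
      ∫ u, ind (z, u) ∂ρ = (ρ (cap z t)).toReal := by
    intro ρ _ z
    rw [show (fun u => ind (z, u)) = (cap z t).indicator (fun _ => (1:ℝ)) from funext (ind_left z),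
      integral_indicator_const (1:ℝ) (measurableSet_cap _ _)]
    simp [measureReal_def]
  have gen' : ∀ u : Sphere d, ∫ z, ind (z, u) ∂σ = c := by
    intro u
    rw [show (fun z => ind (z, u)) = (cap u t).indicator (fun _ => (1:ℝ)) from
      funext (fun z => ind_right z u),
      integral_indicator_const (1:ℝ) (measurableSet_cap _ _)]
    simp [measureReal_def, hcapconst u]
  have hindint : ∀ (ρ₁ ρ₂ : Measure (Sphere d)) [IsFiniteMeasure ρ₁] [IsFiniteMeasure ρ₂],
      Integrable ind (ρ₁.prod ρ₂) := fun ρ₁ ρ₂ _ _ => bdd_int hindmeas.aestronglyMeasurable hindbd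
  -- total mass of densities
  have hdensint1 : ∀ (ρ : Measure (Sphere d)) [IsProbabilityMeasure ρ],
      ∫ z, dens ρ z ∂σ = 1 := by
    intro ρ hρ
    have e1 : ∫ z, dens ρ z ∂σ = ∫ z, c⁻¹ * ∫ u, ind (z, u) ∂ρ ∂σ := by
      apply integral_congr_ae (ae_of_all _ fun z => ?_)
      rw [hdensdef, gen ρ z]
    rw [e1, integral_const_mul,
      integral_integral_swap (f := fun z u => ind (z, u)) (hindint σ ρ)]
    have e2 : ∫ u, ∫ z, ind (z, u) ∂σ ∂ρ = ∫ u, c ∂ρ :=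
      integral_congr_ae (ae_of_all _ fun u => gen' u)
    rw [e2, integral_const]
    simp [hc.ne']
  have hdensintg : ∀ (ρ : Measure (Sphere d)) [IsProbabilityMeasure ρ],
      Integrable (dens ρ) σ := fun ρ _ => bdd_int (hdensmeas ρ).aestronglyMeasurable (hdensabs ρ)
  -- the perturbation
  set g : Sphere d → ℝ := fun z => dens a z - dens b z with hgdef
  have hgmeas : Measurable g := (hdensmeas a).sub (hdensmeas b)
  have hgbd : ∀ z, |g z| ≤ c⁻¹ := by
    intro z
    rw [hgdef, abs_le]
    constructor
    · have := (hdensbd a z).1; have := (hdensbd b z).2; dsimp only; linarith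
    · have := (hdensbd a z).2; have := (hdensbd b z).1; dsimp only; linarith
  have hgint : Integrable g σ := (hdensintg a).sub (hdensintg b)
  have hgzero : ∫ z, g z ∂σ = 0 := by
    rw [hgdef, integral_sub (hdensintg a) (hdensintg b), hdensint1 a, hdensint1 b, sub_self]
  set ε₀ : ℝ := c / 2 with hε₀def
  have hε₀ : 0 < ε₀ := by rw [hε₀def]; positivity
  set W : Sphere d → ℝ := fun z => 1 + ε₀ * g z with hWdef
  have hW0 : ∀ z, (2:ℝ)⁻¹ ≤ W z ∧ W z ≤ 2 := by
    intro z
    have h1 : |ε₀ * g z| ≤ 2⁻¹ := by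
      rw [abs_mul, abs_of_pos hε₀]
      have h2 : ε₀ * |g z| ≤ ε₀ * c⁻¹ := by nlinarith [hgbd z, abs_nonneg (g z)]
      have h3 : ε₀ * c⁻¹ = 2⁻¹ := by rw [hε₀def]; field_simp
      linarith
    have h4 := abs_le.1 h1
    have e : W z = 1 + ε₀ * g z := rfl
    constructor
    · rw [e]
      exact le_trans (by norm_num : (2:ℝ)⁻¹ ≤ 1 + -2⁻¹) (add_le_add_right h4.1 1)
    · rw [e]
      exact le_trans (add_le_add_right h4.2 1) (by norm_num)
  have hWmeas : Measurable W := measurable_const.add (hgmeas.const_mul _)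
  have hWbd : ∀ z, |W z| ≤ 2 := fun z =>
    abs_le.2 ⟨le_trans (by norm_num : (-2:ℝ) ≤ 2⁻¹) (hW0 z).1, (hW0 z).2⟩
  have hWnn : ∀ z, 0 ≤ W z := fun z => le_trans (by norm_num) (hW0 z).1
  have hWint : Integrable W σ := bdd_int hWmeas.aestronglyMeasurable hWbd
  have hWint1 : ∫ z, W z ∂σ = 1 := by
    rw [hWdef]
    rw [integral_add (integrable_const _) (hgint.const_mul _), integral_const, integral_const_mul,
      hgzero]
    simp
  set w : Sphere d → NNReal := fun z => (W z).toNNReal with hwdef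
  have hwmeas : Measurable w := hWmeas.real_toNNReal
  set μ' : Measure (Sphere d) := Measure.withDensity σ (fun z => (w z : ℝ≥0∞)) with hμ'def
  haveI hμ'prob : IsProbabilityMeasure μ' := by
    constructor
    rw [hμ'def, withDensity_apply _ MeasurableSet.univ, Measure.restrict_univ]
    have e : ∀ z, ((w z : ℝ≥0∞)) = ENNReal.ofReal (W z) := by
      intro z; rw [hwdef]; rfl
    rw [lintegral_congr e, ← ofReal_integral_eq_lintegral_ofReal hWint (ae_of_all _ hWnn),
      hWint1, ENNReal.ofReal_one]
  have hsmul : ∀ f : Sphere d → ℝ, ∫ z, f z ∂μ' = ∫ z, W z * f z ∂σ := by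
    intro f
    rw [hμ'def, integral_withDensity_eq_integral_smul hwmeas]
    apply integral_congr_ae (ae_of_all _ fun z => ?_)
    rw [NNReal.smul_def, Real.coe_toNNReal _ (hWnn z), smul_eq_mul]
  -- energy of the perturbed measure
  have intWWG : Integrable (fun p : Sphere d × Sphere d => W p.1 * (W p.2 * G p)) (Measure.prod σ σ) := by
    refine bdd_int (((hWmeas.comp measurable_fst).mul
      ((hWmeas.comp measurable_snd).mul hGmeas)).aestronglyMeasurable) (M := 2 * (2 * M)) ?_
    intro p
    exact abs_mul_le (hWbd p.1) (abs_mul_le (hWbd p.2) (hM p))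
  have hEμ' : ∫ x, ∫ y, F (ip x y) ∂μ' ∂μ' = ∫ p, W p.1 * W p.2 * G p ∂(Measure.prod σ σ) := by
    have e1 : ∫ x, ∫ y, F (ip x y) ∂μ' ∂μ' = ∫ x, (W x * ∫ y, W y * G (x, y) ∂σ) ∂σ := by
      rw [← hsmul (fun x => ∫ y, W y * G (x, y) ∂σ)]
      apply integral_congr_ae (ae_of_all _ fun x => ?_)
      exact hsmul (fun y => G (x, y))
    rw [e1]
    have e2 : ∫ x, (W x * ∫ y, W y * G (x, y) ∂σ) ∂σ
        = ∫ x, ∫ y, W x * (W y * G (x, y)) ∂σ ∂σ :=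
      integral_congr_ae (ae_of_all _ fun x => (integral_const_mul (W x) _).symm)
    rw [e2, ← integral_prod _ intWWG]
    apply integral_congr_ae (ae_of_all _ fun p => ?_)
    ring
  -- cross terms
  have cross1 : ∀ φ : Sphere d → ℝ, Measurable φ → ∀ B : ℝ, (∀ z, |φ z| ≤ B) →
      ∫ p, φ p.1 * G p ∂(Measure.prod σ σ) = (∫ z, φ z ∂σ) * s₀ := by
    intro φ hφ B hB
    have hint : Integrable (fun p : Sphere d × Sphere d => φ p.1 * G p) (Measure.prod σ σ) :=
      bdd_int ((hφ.comp measurable_fst).mul hGmeas).aestronglyMeasurable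
        (fun p => abs_mul_le (hB p.1) (hM p))
    rw [integral_prod _ hint]
    have e : ∀ x : Sphere d, ∫ y, φ x * G (x, y) ∂σ = φ x * s₀ := by
      intro x; rw [integral_const_mul, hpotx]
    rw [integral_congr_ae (ae_of_all _ e), integral_mul_const]
  have cross2 : ∀ φ : Sphere d → ℝ, Measurable φ → ∀ B : ℝ, (∀ z, |φ z| ≤ B) →
      ∫ p, φ p.2 * G p ∂(Measure.prod σ σ) = (∫ z, φ z ∂σ) * s₀ := by
    intro φ hφ B hB
    have hint : Integrable (fun p : Sphere d × Sphere d => φ p.2 * G p) (Measure.prod σ σ) :=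
      bdd_int ((hφ.comp measurable_snd).mul hGmeas).aestronglyMeasurable
        (fun p => abs_mul_le (hB p.2) (hM p))
    rw [integral_prod_symm _ hint]
    have e : ∀ y : Sphere d, ∫ x, φ y * G (x, y) ∂σ = φ y * s₀ := by
      intro y; rw [integral_const_mul, hpoty]
    rw [integral_congr_ae (ae_of_all _ e), integral_mul_const]
  -- integrabilities
  have int2 : Integrable (fun p : Sphere d × Sphere d => g p.1 * G p) (Measure.prod σ σ) :=
    bdd_int ((hgmeas.comp measurable_fst).mul hGmeas).aestronglyMeasurable
      (fun p => abs_mul_le (hgbd p.1) (hM p))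
  have int3 : Integrable (fun p : Sphere d × Sphere d => g p.2 * G p) (Measure.prod σ σ) :=
    bdd_int ((hgmeas.comp measurable_snd).mul hGmeas).aestronglyMeasurable
      (fun p => abs_mul_le (hgbd p.2) (hM p))
  have int4 : Integrable (fun p : Sphere d × Sphere d => g p.1 * g p.2 * G p)
      (Measure.prod σ σ) :=
    bdd_int (((hgmeas.comp measurable_fst).mul (hgmeas.comp measurable_snd)).mul
        hGmeas).aestronglyMeasurable
      (fun p => abs_mul_le (abs_mul_le (hgbd p.1) (hgbd p.2)) (hM p))
  -- expansion of the energy of μ'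
  have hexp : ∫ p, W p.1 * W p.2 * G p ∂(Measure.prod σ σ)
      = s₀ + ε₀ ^ 2 * ∫ p, g p.1 * g p.2 * G p ∂(Measure.prod σ σ) := by
    have e : (fun p : Sphere d × Sphere d => W p.1 * W p.2 * G p) = fun p =>
        (G p + ε₀ * (g p.1 * G p)) + (ε₀ * (g p.2 * G p) + ε₀ ^ 2 * (g p.1 * g p.2 * G p)) := by
      funext p
      show (1 + ε₀ * g p.1) * (1 + ε₀ * g p.2) * G p = _
      ring
    have i2 : ∫ p : Sphere d × Sphere d, ε₀ * (g p.1 * G p) ∂(Measure.prod σ σ)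
        = ε₀ * ((∫ z, g z ∂σ) * s₀) := by
      rw [integral_const_mul, cross1 g hgmeas c⁻¹ hgbd]
    have i3 : ∫ p : Sphere d × Sphere d, ε₀ * (g p.2 * G p) ∂(Measure.prod σ σ)
        = ε₀ * ((∫ z, g z ∂σ) * s₀) := by
      rw [integral_const_mul, cross2 g hgmeas c⁻¹ hgbd]
    have i4 : ∫ p : Sphere d × Sphere d, ε₀ ^ 2 * (g p.1 * g p.2 * G p) ∂(Measure.prod σ σ)
        = ε₀ ^ 2 * ∫ p, g p.1 * g p.2 * G p ∂(Measure.prod σ σ) := integral_const_mul _ _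
    calc ∫ p, W p.1 * W p.2 * G p ∂(Measure.prod σ σ)
        = ∫ p : Sphere d × Sphere d, ((G p + ε₀ * (g p.1 * G p))
            + (ε₀ * (g p.2 * G p) + ε₀ ^ 2 * (g p.1 * g p.2 * G p))) ∂(Measure.prod σ σ) := by
          rw [e]
      _ = (∫ p : Sphere d × Sphere d, (G p + ε₀ * (g p.1 * G p)) ∂(Measure.prod σ σ))
            + ∫ p : Sphere d × Sphere d, (ε₀ * (g p.2 * G p)
              + ε₀ ^ 2 * (g p.1 * g p.2 * G p)) ∂(Measure.prod σ σ) :=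
          integral_add ((hGint σ σ).add (int2.const_mul ε₀))
            ((int3.const_mul ε₀).add (int4.const_mul (ε₀ ^ 2)))
      _ = ((∫ p, G p ∂(Measure.prod σ σ))
            + ∫ p : Sphere d × Sphere d, ε₀ * (g p.1 * G p) ∂(Measure.prod σ σ))
            + ((∫ p : Sphere d × Sphere d, ε₀ * (g p.2 * G p) ∂(Measure.prod σ σ))
              + ∫ p : Sphere d × Sphere d, ε₀ ^ 2 * (g p.1 * g p.2 * G p)
                ∂(Measure.prod σ σ)) := by
          rw [integral_add (hGint σ σ) (int2.const_mul ε₀)]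
          rw [integral_add (int3.const_mul ε₀) (int4.const_mul (ε₀ ^ 2))]
      _ = (s₀ + ε₀ * ((∫ z, g z ∂σ) * s₀)) + (ε₀ * ((∫ z, g z ∂σ) * s₀)
            + ε₀ ^ 2 * ∫ p, g p.1 * g p.2 * G p ∂(Measure.prod σ σ)) := by
          rw [i2, i3, i4, ← hEp σ σ, ← hs₀def]
      _ = s₀ + ε₀ ^ 2 * ∫ p, g p.1 * g p.2 * G p ∂(Measure.prod σ σ) := by
          rw [hgzero]; ring
  -- non-negativity of the quadratic form at the mollified difference
  have hQ0 : 0 ≤ ∫ p, g p.1 * g p.2 * G p ∂(Measure.prod σ σ) := by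
    have h1 := hmin μ' hμ'prob
    rw [hEμ', hexp] at h1
    have h2 : ε₀ ^ 2 * 0 ≤ ε₀ ^ 2 * ∫ p, g p.1 * g p.2 * G p ∂(Measure.prod σ σ) := by
      rw [mul_zero]; linarith
    exact le_of_mul_le_mul_left h2 (pow_pos hε₀ 2)
  -- bilinear expansion of the quadratic form
  have intJ : ∀ (ρ₁ ρ₂ : Measure (Sphere d)) [IsProbabilityMeasure ρ₁] [IsProbabilityMeasure ρ₂],
      Integrable (fun p : Sphere d × Sphere d => dens ρ₁ p.1 * dens ρ₂ p.2 * G p)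
        (Measure.prod σ σ) := by
    intro ρ₁ ρ₂ _ _
    exact bdd_int ((((hdensmeas ρ₁).comp measurable_fst).mul
        ((hdensmeas ρ₂).comp measurable_snd)).mul hGmeas).aestronglyMeasurable
      (fun p => abs_mul_le (abs_mul_le (hdensabs ρ₁ p.1) (hdensabs ρ₂ p.2)) (hM p))
  have hQsplit : ∫ p, g p.1 * g p.2 * G p ∂(Measure.prod σ σ)
      = (∫ p, dens a p.1 * dens a p.2 * G p ∂(Measure.prod σ σ))
        - (∫ p, dens a p.1 * dens b p.2 * G p ∂(Measure.prod σ σ))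
        - ((∫ p, dens b p.1 * dens a p.2 * G p ∂(Measure.prod σ σ))
          - (∫ p, dens b p.1 * dens b p.2 * G p ∂(Measure.prod σ σ))) := by
    have e : (fun p : Sphere d × Sphere d => g p.1 * g p.2 * G p) = fun p =>
        (dens a p.1 * dens a p.2 * G p - dens a p.1 * dens b p.2 * G p)
          - (dens b p.1 * dens a p.2 * G p - dens b p.1 * dens b p.2 * G p) := by
      funext p
      show (dens a p.1 - dens b p.1) * (dens a p.2 - dens b p.2) * G p = _
      ring
    calc ∫ p, g p.1 * g p.2 * G p ∂(Measure.prod σ σ)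
        = ∫ p : Sphere d × Sphere d,
            ((dens a p.1 * dens a p.2 * G p - dens a p.1 * dens b p.2 * G p)
              - (dens b p.1 * dens a p.2 * G p - dens b p.1 * dens b p.2 * G p))
            ∂(Measure.prod σ σ) := by rw [e]
      _ = (∫ p : Sphere d × Sphere d, (dens a p.1 * dens a p.2 * G p
              - dens a p.1 * dens b p.2 * G p) ∂(Measure.prod σ σ))
            - ∫ p : Sphere d × Sphere d, (dens b p.1 * dens a p.2 * G p
              - dens b p.1 * dens b p.2 * G p) ∂(Measure.prod σ σ) :=
          integral_sub ((intJ a a).sub (intJ a b)) ((intJ b a).sub (intJ b b))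
      _ = ((∫ p, dens a p.1 * dens a p.2 * G p ∂(Measure.prod σ σ))
            - (∫ p, dens a p.1 * dens b p.2 * G p ∂(Measure.prod σ σ)))
            - ((∫ p, dens b p.1 * dens a p.2 * G p ∂(Measure.prod σ σ))
              - (∫ p, dens b p.1 * dens b p.2 * G p ∂(Measure.prod σ σ))) := by
          rw [integral_sub (intJ a a) (intJ a b)]
          rw [integral_sub (intJ b a) (intJ b b)]
  -- the comparison between mollified and true energies
  have habs2 : ∀ x y : ℝ, |x - y| ≤ |x| + |y| := fun x y => by
    simpa only [Real.norm_eq_abs] using norm_sub_le x y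
  have hcomp : ∀ (μ ν : Measure (Sphere d)) [IsProbabilityMeasure μ] [IsProbabilityMeasure ν],
      |(∫ p, dens μ p.1 * dens ν p.2 * G p ∂(Measure.prod σ σ))
        - ∫ q, G q ∂(Measure.prod μ ν)| ≤ η := by
    intro μ ν hμprob hνprob
    set Φ : (Sphere d × Sphere d) × (Sphere d × Sphere d) → ℝ :=
      fun r => (c⁻¹ * ind (r.1.1, r.2.1)) * ((c⁻¹ * ind (r.1.2, r.2.2)) * G r.1) with hΦdef
    have hΦmeas : Measurable Φ := by
      apply Measurable.mul
      · exact (hindmeas.comp ((measurable_fst.comp measurable_fst).prodMk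
          (measurable_fst.comp measurable_snd))).const_mul _
      · exact ((hindmeas.comp ((measurable_snd.comp measurable_fst).prodMk
          (measurable_snd.comp measurable_snd))).const_mul _).mul (hGmeas.comp measurable_fst)
    have hcind : ∀ r : Sphere d × Sphere d, |c⁻¹ * ind r| ≤ c⁻¹ := by
      intro r
      calc |c⁻¹ * ind r| = c⁻¹ * |ind r| := by rw [abs_mul, abs_of_nonneg hcinv]
        _ ≤ c⁻¹ * 1 := mul_le_mul_of_nonneg_left (hindbd r) hcinv
        _ = c⁻¹ := mul_one _
    have hΦbd : ∀ r, |Φ r| ≤ c⁻¹ * (c⁻¹ * M) := fun r =>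
      abs_mul_le (hcind _) (abs_mul_le (hcind _) (hM _))
    have hΦint : Integrable Φ ((Measure.prod σ σ).prod (Measure.prod μ ν)) :=
      bdd_int hΦmeas.aestronglyMeasurable hΦbd
    -- pointwise identity for the mollified kernel
    have hA : ∀ p : Sphere d × Sphere d,
        dens μ p.1 * dens ν p.2 * G p = ∫ q, Φ (p, q) ∂(Measure.prod μ ν) := by
      intro p
      have e0 : ∫ q, Φ (p, q) ∂(Measure.prod μ ν)
          = ∫ q : Sphere d × Sphere d,
              (c⁻¹ * ind (p.1, q.1)) * ((c⁻¹ * ind (p.2, q.2)) * G p) ∂(Measure.prod μ ν) :=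
        integral_congr_ae (ae_of_all _ fun q => by rw [hΦdef])
      have e1 : ∫ q : Sphere d × Sphere d,
            (c⁻¹ * ind (p.1, q.1)) * ((c⁻¹ * ind (p.2, q.2)) * G p) ∂(Measure.prod μ ν)
          = (∫ u, c⁻¹ * ind (p.1, u) ∂μ) * ∫ v, (c⁻¹ * ind (p.2, v)) * G p ∂ν :=
        integral_prod_mul (fun u => c⁻¹ * ind (p.1, u)) (fun v => (c⁻¹ * ind (p.2, v)) * G p)
      rw [e0, e1, integral_const_mul, gen μ p.1, integral_mul_const, integral_const_mul, gen ν p.2]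
      show dens μ p.1 * dens ν p.2 * G p
        = c⁻¹ * (μ (cap p.1 t)).toReal * (c⁻¹ * (ν (cap p.2 t)).toReal * G p)
      simp only [hdensdef]
      ring
    have hJ : ∫ p, dens μ p.1 * dens ν p.2 * G p ∂(Measure.prod σ σ)
        = ∫ q, ∫ p, Φ (p, q) ∂(Measure.prod σ σ) ∂(Measure.prod μ ν) :=
      calc ∫ p, dens μ p.1 * dens ν p.2 * G p ∂(Measure.prod σ σ)
          = ∫ p, (∫ q, Φ (p, q) ∂(Measure.prod μ ν)) ∂(Measure.prod σ σ) :=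
            integral_congr_ae (ae_of_all _ hA)
        _ = ∫ q, ∫ p, Φ (p, q) ∂(Measure.prod σ σ) ∂(Measure.prod μ ν) :=
            integral_integral_swap (f := fun p q => Φ (p, q)) hΦint
    -- the averaged kernel is uniformly close to the kernel
    have prodind_int : ∀ q : Sphere d × Sphere d,
        Integrable (fun p : Sphere d × Sphere d =>
          (c⁻¹ * ind (p.1, q.1)) * (c⁻¹ * ind (p.2, q.2))) (Measure.prod σ σ) := fun q =>
      bdd_int (((hindmeas.comp (measurable_fst.prodMk measurable_const)).const_mul _).mul
          ((hindmeas.comp (measurable_snd.prodMk measurable_const)).const_mul _)).aestronglyMeasurable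
        (fun p => abs_mul_le (hcind _) (hcind _))
    have hone : ∀ q : Sphere d × Sphere d,
        ∫ p, (c⁻¹ * ind (p.1, q.1)) * (c⁻¹ * ind (p.2, q.2)) ∂(Measure.prod σ σ) = 1 := by
      intro q
      have e1 : ∫ p : Sphere d × Sphere d,
            (c⁻¹ * ind (p.1, q.1)) * (c⁻¹ * ind (p.2, q.2)) ∂(Measure.prod σ σ)
          = (∫ z, c⁻¹ * ind (z, q.1) ∂σ) * ∫ z, c⁻¹ * ind (z, q.2) ∂σ :=
        integral_prod_mul (fun z => c⁻¹ * ind (z, q.1)) (fun z => c⁻¹ * ind (z, q.2))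
      rw [e1, integral_const_mul, integral_const_mul, gen' q.1, gen' q.2]
      field_simp
    have hΦqint : ∀ q, Integrable (fun p => Φ (p, q)) (Measure.prod σ σ) := fun q =>
      bdd_int ((hΦmeas.comp (measurable_id.prodMk measurable_const)).aestronglyMeasurable)
        (fun p => hΦbd (p, q))
    have hKt : ∀ q : Sphere d × Sphere d,
        |(∫ p, Φ (p, q) ∂(Measure.prod σ σ)) - G q| ≤ η := by
      intro q
      have e4 : (fun p : Sphere d × Sphere d =>
            ((c⁻¹ * ind (p.1, q.1)) * (c⁻¹ * ind (p.2, q.2))) * (G p - G q))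
          = fun p => Φ (p, q)
            - ((c⁻¹ * ind (p.1, q.1)) * (c⁻¹ * ind (p.2, q.2))) * G q := by
        funext p; rw [hΦdef]; ring
      have e2 : (∫ p, Φ (p, q) ∂(Measure.prod σ σ)) - G q
          = ∫ p, ((c⁻¹ * ind (p.1, q.1)) * (c⁻¹ * ind (p.2, q.2))) * (G p - G q)
              ∂(Measure.prod σ σ) := by
        rw [show (fun p : Sphere d × Sphere d =>
            ((c⁻¹ * ind (p.1, q.1)) * (c⁻¹ * ind (p.2, q.2))) * (G p - G q)) = _ from e4,
          integral_sub (hΦqint q) ((prodind_int q).mul_const _), integral_mul_const, hone,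
          one_mul]
      rw [e2]
      have hintf : Integrable (fun p : Sphere d × Sphere d =>
          ((c⁻¹ * ind (p.1, q.1)) * (c⁻¹ * ind (p.2, q.2))) * (G p - G q))
          (Measure.prod σ σ) := by
        refine bdd_int ((((hindmeas.comp (measurable_fst.prodMk measurable_const)).const_mul
          _).mul ((hindmeas.comp (measurable_snd.prodMk measurable_const)).const_mul _)).mul
          (hGmeas.sub measurable_const)).aestronglyMeasurable
          (M := (c⁻¹ * c⁻¹) * (M + M)) (fun p => ?_)
        exact abs_mul_le (abs_mul_le (hcind _) (hcind _))
          (le_trans (habs2 _ _) (add_le_add (hM p) (hM q)))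
      have habs3 : |∫ p, ((c⁻¹ * ind (p.1, q.1)) * (c⁻¹ * ind (p.2, q.2))) * (G p - G q)
            ∂(Measure.prod σ σ)|
          ≤ ∫ p, |((c⁻¹ * ind (p.1, q.1)) * (c⁻¹ * ind (p.2, q.2))) * (G p - G q)|
              ∂(Measure.prod σ σ) := by
        simpa only [Real.norm_eq_abs] using norm_integral_le_integral_norm
          (μ := Measure.prod σ σ) (fun p : Sphere d × Sphere d =>
            ((c⁻¹ * ind (p.1, q.1)) * (c⁻¹ * ind (p.2, q.2))) * (G p - G q))
      refine le_trans habs3 (le_trans (integral_mono hintf.abs ((prodind_int q).mul_const η)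
        (fun p => ?_)) ?_)
      · have hpnn : 0 ≤ (c⁻¹ * ind (p.1, q.1)) * (c⁻¹ * ind (p.2, q.2)) :=
          mul_nonneg (mul_nonneg hcinv (hindnn _)) (mul_nonneg hcinv (hindnn _))
        show |((c⁻¹ * ind (p.1, q.1)) * (c⁻¹ * ind (p.2, q.2))) * (G p - G q)|
          ≤ ((c⁻¹ * ind (p.1, q.1)) * (c⁻¹ * ind (p.2, q.2))) * η
        rw [abs_mul, abs_of_nonneg hpnn]
        by_cases h1 : (p.1, q.1) ∈ D
        · by_cases h2 : (p.2, q.2) ∈ D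
          · refine mul_le_mul_of_nonneg_left ?_ hpnn
            refine hpair p q ?_ ?_
            · exact show t < ip q.1 p.1 from by rw [ip_symm]; exact h1
            · exact show t < ip q.2 p.2 from by rw [ip_symm]; exact h2
          · have hz : ind (p.2, q.2) = 0 := by rw [hinddef, Set.indicator_of_notMem h2]
            rw [hz]; simp
        · have hz : ind (p.1, q.1) = 0 := by rw [hinddef, Set.indicator_of_notMem h1]
          rw [hz]; simp
      · rw [integral_mul_const, hone, one_mul]
    -- conclude
    have hKtint : Integrable (fun q => ∫ p, Φ (p, q) ∂(Measure.prod σ σ)) (Measure.prod μ ν) :=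
      hΦint.integral_prod_right
    have hGQ : Integrable G (Measure.prod μ ν) := hGint μ ν
    rw [hJ, ← integral_sub hKtint hGQ]
    have habs4 : |∫ q, ((∫ p, Φ (p, q) ∂(Measure.prod σ σ)) - G q) ∂(Measure.prod μ ν)|
        ≤ ∫ q, |(∫ p, Φ (p, q) ∂(Measure.prod σ σ)) - G q| ∂(Measure.prod μ ν) := by
      simpa only [Real.norm_eq_abs] using norm_integral_le_integral_norm (μ := Measure.prod μ ν)
        (fun q => (∫ p, Φ (p, q) ∂(Measure.prod σ σ)) - G q)
    refine le_trans habs4 (le_trans (integral_mono (hKtint.sub hGQ).abs (integrable_const _)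
      (fun q => hKt q)) ?_)
    rw [integral_const]
    simp
  -- final assembly
  have Eq_ab : ∫ q, G q ∂(Measure.prod b a) = ∫ q, G q ∂(Measure.prod a b) := by
    rw [← Measure.prod_swap, integral_map measurable_swap.aemeasurable hG.aestronglyMeasurable]
    apply integral_congr_ae (ae_of_all _ fun q => ?_)
    show F (ip q.2 q.1) = F (ip q.1 q.2)
    rw [ip_symm]
  have c1 := abs_le.1 (hcomp a a)
  have c2 := abs_le.1 (hcomp a b)
  have c3 := abs_le.1 (hcomp b a)
  have c4 := abs_le.1 (hcomp b b)
  have h4η : η + η + η + η = ε := by rw [hηdef]; ring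
  linarith [hQ0, hQsplit, c1.2, c2.1, c3.1, c4.2, Eq_ab, h4η]


end Core

/-- Let `F ∈ C[-1,1]` with `I_F(σ) ≥ 0`, and suppose `σ` minimizes `I_F` over Borel probability
measures on `S^d`. Then every finite signed Borel measure of total mass zero, written as
`γ = μ₊ - μ₋` with `μ₊(S^d) = μ₋(S^d)`, has non-negative energy:
`2 ∬ F(x·y) dμ₊ dμ₋ ≤ I_F(μ₊) + I_F(μ₋)`. -/
theorem mass_zero_energy_nonneg (d : ℕ) (hd : 1 ≤ d)
    (F : ℝ → ℝ) (hF : ContinuousOn F (Set.Icc (-1 : ℝ) 1))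
    (hF0 : 0 ≤ ∫ x, ∫ y, F (ip x y) ∂(sphereMeasure d) ∂(sphereMeasure d))
    (hmin : ∀ μ : Measure (Sphere d), IsProbabilityMeasure μ →
        (∫ x, ∫ y, F (ip x y) ∂(sphereMeasure d) ∂(sphereMeasure d))
          ≤ ∫ x, ∫ y, F (ip x y) ∂μ ∂μ)
    (μp μm : Measure (Sphere d)) [IsFiniteMeasure μp] [IsFiniteMeasure μm]
    (hmass : μp Set.univ = μm Set.univ) :
    2 * (∫ x, ∫ y, F (ip x y) ∂μm ∂μp)
      ≤ (∫ x, ∫ y, F (ip x y) ∂μp ∂μp) + (∫ x, ∫ y, F (ip x y) ∂μm ∂μm) := by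
  rcases eq_or_ne (μp Set.univ) 0 with h0 | h0
  · have hp : μp = 0 := Measure.measure_univ_eq_zero.1 h0
    have hm' : μm = 0 := Measure.measure_univ_eq_zero.1 (hmass ▸ h0)
    simp [hp, hm']
  · set m := μp Set.univ with hm
    have hmtop : m ≠ ∞ := measure_ne_top μp _
    set r : ℝ≥0∞ := m⁻¹ with hr
    have hrtop : r ≠ ∞ := ENNReal.inv_ne_top.2 h0
    set a : Measure (Sphere d) := r • μp with ha
    set b : Measure (Sphere d) := r • μm with hb
    haveI hpa : IsProbabilityMeasure a := by
      constructor
      rw [ha, Measure.smul_apply, smul_eq_mul, hr]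
      exact ENNReal.inv_mul_cancel h0 hmtop
    haveI hpb : IsProbabilityMeasure b := by
      constructor
      rw [hb, Measure.smul_apply, smul_eq_mul, hr, ← hmass]
      exact ENNReal.inv_mul_cancel h0 hmtop
    have key := SphereEnergy.core F hF hmin a b
    have hscale : ∀ (μ ν : Measure (Sphere d)),
        (∫ x, ∫ y, F (ip x y) ∂(r • ν) ∂(r • μ))
          = r.toReal * (r.toReal * ∫ x, ∫ y, F (ip x y) ∂ν ∂μ) := by
      intro μ ν
      rw [integral_smul_measure]
      rw [smul_eq_mul]
      congr 1
      rw [← integral_const_mul]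
      congr 1
      ext x
      rw [integral_smul_measure, smul_eq_mul]
    rw [ha, hb, hscale, hscale, hscale] at key
    have hrpos : 0 < r.toReal := ENNReal.toReal_pos (by simp [hr, hmtop]) hrtop
    set X := ∫ x, ∫ y, F (ip x y) ∂μm ∂μp
    set Y := ∫ x, ∫ y, F (ip x y) ∂μp ∂μp
    set Z := ∫ x, ∫ y, F (ip x y) ∂μm ∂μm
    have h2 : r.toReal * r.toReal * (2 * X) ≤ r.toReal * r.toReal * (Y + Z) := by ring_nf; ring_nf at key; linarith
    exact le_of_mul_le_mul_left h2 (mul_pos hrpos hrpos)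
end
end

section
/- (Generalized Stolarsky principle) Let d ≥ 1, let f : [−1,1] → ℝ be Borel measurable with ∫_{S^d} f(x·z)² dσ(z) < ∞ for x ∈ S^d, and let F : [−1,1] → ℝ be such that F(x·y) = ∫_{S^d} f(x·z) f(z·y) dσ(z) for all x, y ∈ S^d. Then for every Borel probability measure μ on S^d, I_F(μ) − I_F(σ) = D²_{L²,f}(μ), where D²_{L²,f}(μ) = ∫_{S^d} | ∫_{S^d} f(x·y) dμ(y) − ∫_{S^d} f(x·y) dσ(y) |² dσ(x). In particular, for μ = (1/N) Σ_{i=1}^N δ_{z_i}, (1/N²) Σ_{i,j=1}^N F(z_i·z_j) − ∬_{S^d×S^d} F(x·y) dσ(x)dσ(y) = ∫_{S^d} | (1/N) Σ_{i=1}^N f(x·z_i) − ∫_{S^d} f(x·y) dσ(y) |² dσ(x). -/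
open MeasureTheory Metric Set
open scoped RealInnerProductSpace ENNReal

noncomputable section

open scoped Pointwise

namespace StolAux

variable {d : ℕ}

local notation "𝔼" => EuclideanSpace ℝ (Fin (d + 1))

lemma ip_comm (x y : Sphere d) : ip x y = ip y x := real_inner_comm _ _

lemma measurable_ip2 : Measurable (fun p : Sphere d × Sphere d => ip p.1 p.2) := by
  have : Continuous (fun p : Sphere d × Sphere d => ip p.1 p.2) := by
    unfold ip
    exact (continuous_subtype_val.comp continuous_fst).inner
      (continuous_subtype_val.comp continuous_snd)
  exact this.measurable

def sMap (A : 𝔼 ≃ₗᵢ[ℝ] 𝔼) (z : Sphere d) : Sphere d :=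
  ⟨A z, by
    rw [mem_sphere_zero_iff_norm, A.norm_map]
    exact mem_sphere_zero_iff_norm.mp z.2⟩

lemma continuous_sMap (A : 𝔼 ≃ₗᵢ[ℝ] 𝔼) : Continuous (sMap (d := d) A) :=
  Continuous.subtype_mk (A.continuous.comp continuous_subtype_val) _

def sHomeo (A : 𝔼 ≃ₗᵢ[ℝ] 𝔼) : Sphere d ≃ₜ Sphere d where
  toFun := sMap A
  invFun := sMap A.symm
  left_inv z := Subtype.ext (A.symm_apply_apply z)
  right_inv z := Subtype.ext (A.apply_symm_apply z)
  continuous_toFun := continuous_sMap A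
  continuous_invFun := continuous_sMap A.symm

lemma map_toSphere (A : 𝔼 ≃ₗᵢ[ℝ] 𝔼) :
    Measure.map (sMap A) (volume : Measure 𝔼).toSphere = (volume : Measure 𝔼).toSphere := by
  refine Measure.ext fun s hs => ?_
  rw [Measure.map_apply (continuous_sMap A).measurable hs,
    Measure.toSphere_apply' _ ((continuous_sMap A).measurable hs),
    Measure.toSphere_apply' _ hs]
  have h1 : (Subtype.val '' (sMap A ⁻¹' s) : Set 𝔼) = ⇑A ⁻¹' (Subtype.val '' s) := by
    ext v
    constructor
    · rintro ⟨z, hz, rfl⟩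
      exact ⟨sMap A z, hz, rfl⟩
    · rintro ⟨w, hw, hwv⟩
      have hv : v ∈ Metric.sphere (0 : 𝔼) 1 := by
        rw [mem_sphere_zero_iff_norm, ← A.norm_map v, ← hwv]
        exact mem_sphere_zero_iff_norm.mp w.2
      refine ⟨⟨v, hv⟩, ?_, rfl⟩
      have : sMap A ⟨v, hv⟩ = w := Subtype.ext hwv.symm
      show sMap A ⟨v, hv⟩ ∈ s
      rwa [this]
  rw [h1]
  have h2 : (Ioo (0 : ℝ) 1) • (⇑A ⁻¹' (Subtype.val '' s))
      = ⇑A ⁻¹' ((Ioo (0 : ℝ) 1) • (Subtype.val '' s)) := by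
    ext v
    constructor
    · rintro ⟨r, hr, b, hb, rfl⟩
      refine Set.mem_preimage.mpr ⟨r, hr, A b, hb, ?_⟩
      exact (A.map_smul r b).symm
    · rintro ⟨r, hr, b, hb, heq⟩
      refine ⟨r, hr, A.symm b, ?_, ?_⟩
      · simp only [Set.mem_preimage, A.apply_symm_apply]; exact hb
      · apply A.injective
        rw [A.map_smul, A.apply_symm_apply]
        exact heq
  rw [h2, A.measurePreserving.measure_preimage_emb A.toHomeomorph.measurableEmbedding]

lemma measurePreserving_sMap (A : 𝔼 ≃ₗᵢ[ℝ] 𝔼) :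
    MeasurePreserving (sMap A) (sphereMeasure d) (sphereMeasure d) := by
  refine ⟨(continuous_sMap A).measurable, ?_⟩
  unfold sphereMeasure
  rw [Measure.map_smul, map_toSphere]

lemma integral_comp_sMap (A : 𝔼 ≃ₗᵢ[ℝ] 𝔼) (q : Sphere d → ℝ) :
    ∫ w, q (sMap A w) ∂(sphereMeasure d) = ∫ w, q w ∂(sphereMeasure d) :=
  (measurePreserving_sMap A).integral_comp (sHomeo A).measurableEmbedding q

lemma lintegral_comp_sMap (A : 𝔼 ≃ₗᵢ[ℝ] 𝔼) (q : Sphere d → ℝ≥0∞) (hq : Measurable q) :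
    ∫⁻ w, q (sMap A w) ∂(sphereMeasure d) = ∫⁻ w, q w ∂(sphereMeasure d) :=
  (measurePreserving_sMap A).lintegral_comp hq

lemma refl_exists (x y : Sphere d) :
    ∃ A : 𝔼 ≃ₗᵢ[ℝ] 𝔼, ∀ w : Sphere d, ip y (sMap A w) = ip x w := by
  have hn : ‖(x : 𝔼)‖ = ‖(y : 𝔼)‖ := by
    rw [mem_sphere_zero_iff_norm.mp x.2, mem_sphere_zero_iff_norm.mp y.2]
  have key : ∀ (A : 𝔼 ≃ₗᵢ[ℝ] 𝔼), A (x : 𝔼) = (y : 𝔼) → ∀ w : Sphere d, ip y (sMap A w) = ip x w := by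
    intro A hxy w
    show ⟪(y : 𝔼), (A (w : 𝔼))⟫ = ⟪(x : 𝔼), (w : 𝔼)⟫
    rw [← hxy, LinearIsometryEquiv.inner_map_map]
  exact ⟨_, key (Submodule.reflection (ℝ ∙ ((x : 𝔼) - (y : 𝔼)))ᗮ) (Submodule.reflection_sub hn)⟩

lemma integral_ip_congr (q : ℝ → ℝ) (x y : Sphere d) :
    ∫ w, q (ip x w) ∂(sphereMeasure d) = ∫ w, q (ip y w) ∂(sphereMeasure d) := by
  obtain ⟨A, hA⟩ := refl_exists x y
  calc ∫ w, q (ip x w) ∂(sphereMeasure d)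
      = ∫ w, q (ip y (sMap A w)) ∂(sphereMeasure d) := by simp only [hA]
    _ = _ := integral_comp_sMap A (fun w => q (ip y w))

lemma lintegral_ip_congr (q : ℝ → ℝ≥0∞) (hq : Measurable q) (x y : Sphere d) :
    ∫⁻ w, q (ip x w) ∂(sphereMeasure d) = ∫⁻ w, q (ip y w) ∂(sphereMeasure d) := by
  obtain ⟨A, hA⟩ := refl_exists x y
  calc ∫⁻ w, q (ip x w) ∂(sphereMeasure d)
      = ∫⁻ w, q (ip y (sMap A w)) ∂(sphereMeasure d) := by simp only [hA]
    _ = _ := lintegral_comp_sMap A (fun w => q (ip y w))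
      (hq.comp (measurable_ip2.comp (measurable_const.prodMk measurable_id)))

instance : IsProbabilityMeasure (sphereMeasure d) := by
  constructor
  have hnt : Nontrivial 𝔼 := by
    refine nontrivial_of_ne (EuclideanSpace.single 0 1) 0 fun h => ?_
    have := congrArg norm h
    rw [EuclideanSpace.norm_single, norm_zero, norm_one] at this
    exact one_ne_zero this
  unfold sphereMeasure
  rw [Measure.smul_apply, smul_eq_mul]
  refine ENNReal.inv_mul_cancel ?_ (measure_ne_top _ _)
  rw [Measure.toSphere_apply_univ]
  refine mul_ne_zero ?_ (ne_of_gt (measure_ball_pos _ _ one_pos))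
  simp [finrank_euclideanSpace_fin]

def pt : Sphere d := ⟨EuclideanSpace.single 0 1, by
  rw [mem_sphere_zero_iff_norm, EuclideanSpace.norm_single, norm_one]⟩

end StolAux

namespace StolAux

variable {d : ℕ}

local notation "𝔼" => EuclideanSpace ℝ (Fin (d + 1))

set_option maxHeartbeats 1000000 in
lemma core (f : ℝ → ℝ) (hf : Measurable f)
    (hf2 : ∀ x : Sphere d, Integrable (fun w => f (ip x w) ^ 2) (sphereMeasure d))
    (μ : Measure (Sphere d)) [IsProbabilityMeasure μ] :
    Integrable (fun w => ∫ y, f (ip w y) ∂μ) (sphereMeasure d) ∧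
    Integrable (fun w => (∫ y, f (ip w y) ∂μ) ^ 2) (sphereMeasure d) ∧
    ((∫ x, ∫ y, (∫ w, f (ip x w) * f (ip w y) ∂(sphereMeasure d)) ∂μ ∂μ)
      = ∫ w, (∫ y, f (ip w y) ∂μ) ^ 2 ∂(sphereMeasure d)) ∧
    ((∫ w, (∫ y, f (ip w y) ∂μ) ∂(sphereMeasure d))
      = ∫ w, f (ip (pt : Sphere d) w) ∂(sphereMeasure d)) := by
  have mker : Measurable fun p : Sphere d × Sphere d => f (ip p.1 p.2) := hf.comp measurable_ip2
  have msec : ∀ x : Sphere d, Measurable fun w : Sphere d => f (ip x w) :=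
    fun x => hf.comp (measurable_ip2.comp (measurable_const.prodMk measurable_id))
  have msec' : ∀ y : Sphere d, Measurable fun w : Sphere d => f (ip w y) :=
    fun y => hf.comp (measurable_ip2.comp (measurable_id.prodMk measurable_const))
  have hf2' : ∀ y : Sphere d, Integrable (fun w => f (ip w y) ^ 2) (sphereMeasure d) := by
    intro y
    have h : (fun w : Sphere d => f (ip w y) ^ 2) = fun w => f (ip y w) ^ 2 :=
      funext fun w => by beta_reduce; rw [ip_comm]
    rw [h]; exact hf2 y
  have habs : ∀ a b : ℝ, |a * b| ≤ (a ^ 2 + b ^ 2) / 2 := fun a b =>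
    abs_le.mpr ⟨by nlinarith [sq_nonneg (a + b)], by nlinarith [sq_nonneg (a - b)]⟩
  have habs1 : ∀ a : ℝ, |a| ≤ a ^ 2 + 1 := fun a => by
    nlinarith [sq_nonneg (|a| - 1), sq_abs a, abs_nonneg a]
  have hL1 : ∀ h : Sphere d → ℝ, AEStronglyMeasurable h (sphereMeasure d) →
      Integrable (fun w => h w ^ 2) (sphereMeasure d) → Integrable h (sphereMeasure d) := by
    intro h hm h2
    refine (h2.add (integrable_const 1)).mono' hm (Filter.Eventually.of_forall fun w => ?_)
    rw [Real.norm_eq_abs]; exact habs1 _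
  have hmulL1 : ∀ h k : Sphere d → ℝ, AEStronglyMeasurable h (sphereMeasure d) →
      AEStronglyMeasurable k (sphereMeasure d) →
      Integrable (fun w => h w ^ 2) (sphereMeasure d) →
      Integrable (fun w => k w ^ 2) (sphereMeasure d) →
      Integrable (fun w => h w * k w) (sphereMeasure d) := by
    intro h k hm km h2 k2
    refine ((h2.add k2).div_const 2).mono' (hm.mul km) (Filter.Eventually.of_forall fun w => ?_)
    rw [Real.norm_eq_abs]; exact habs _ _
  have hf1' : ∀ y : Sphere d, Integrable (fun w => f (ip w y)) (sphereMeasure d) :=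
    fun y => hL1 _ (msec' y).aestronglyMeasurable (hf2' y)
  set K2r := ∫ w, f (ip (pt : Sphere d) w) ^ 2 ∂(sphereMeasure d) with hK2rdef
  have hK2r : ∀ x : Sphere d, ∫ w, f (ip x w) ^ 2 ∂(sphereMeasure d) = K2r :=
    fun x => integral_ip_congr (fun t => f t ^ 2) x pt
  have hK2r' : ∀ y : Sphere d, ∫ w, f (ip w y) ^ 2 ∂(sphereMeasure d) = K2r := by
    intro y
    have e3 : ∫ w, f (ip w y) ^ 2 ∂(sphereMeasure d) = ∫ w, f (ip y w) ^ 2 ∂(sphereMeasure d) :=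
      integral_congr_ae (Filter.Eventually.of_forall fun w => by beta_reduce; rw [ip_comm])
    rw [e3]; exact hK2r y
  -- measurability of g
  have mg : StronglyMeasurable fun w : Sphere d => ∫ y, f (ip w y) ∂μ := by
    exact MeasureTheory.StronglyMeasurable.integral_prod_right
      (f := fun w y : Sphere d => f (ip w y)) mker.stronglyMeasurable
  -- Step A
  have stepA : ∀ x : Sphere d,
      ∫ y, (∫ w, f (ip x w) * f (ip w y) ∂(sphereMeasure d)) ∂μ
        = ∫ w, f (ip x w) * (∫ y, f (ip w y) ∂μ) ∂(sphereMeasure d) := by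
    intro x
    have hmint : Measurable (Function.uncurry fun y w : Sphere d => f (ip x w) * f (ip w y)) :=
      (hf.comp (measurable_ip2.comp (measurable_const.prodMk measurable_snd))).mul
        (hf.comp (measurable_ip2.comp (measurable_snd.prodMk measurable_fst)))
    have hint : Integrable (Function.uncurry fun y w : Sphere d =>
        f (ip x w) * f (ip w y)) (μ.prod (sphereMeasure d)) := by
      rw [integrable_prod_iff hmint.aestronglyMeasurable]
      constructor
      · exact Filter.Eventually.of_forall fun y =>
          hmulL1 _ _ (msec x).aestronglyMeasurable (msec' y).aestronglyMeasurable (hf2 x) (hf2' y)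
      · refine (integrable_const K2r).mono'
          (hmint.norm.aestronglyMeasurable.integral_prod_right')
          (Filter.Eventually.of_forall fun y => ?_)
        rw [Real.norm_eq_abs, abs_of_nonneg (integral_nonneg fun w => norm_nonneg _)]
        calc ∫ w, ‖f (ip x w) * f (ip w y)‖ ∂(sphereMeasure d)
            ≤ ∫ w, (f (ip x w) ^ 2 + f (ip w y) ^ 2) / 2 ∂(sphereMeasure d) := by
              refine integral_mono (hmulL1 _ _ (msec x).aestronglyMeasurable
                (msec' y).aestronglyMeasurable (hf2 x) (hf2' y)).norm
                (((hf2 x).add (hf2' y)).div_const 2) fun w => ?_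
              rw [Real.norm_eq_abs]; exact habs _ _
          _ = (K2r + K2r) / 2 := by
              rw [integral_div, integral_add (hf2 x) (hf2' y), hK2r x, hK2r' y]
          _ = K2r := by ring
    calc ∫ y, (∫ w, f (ip x w) * f (ip w y) ∂(sphereMeasure d)) ∂μ
        = ∫ w, (∫ y, f (ip x w) * f (ip w y) ∂μ) ∂(sphereMeasure d) :=
          integral_integral_swap hint
      _ = ∫ w, f (ip x w) * (∫ y, f (ip w y) ∂μ) ∂(sphereMeasure d) := by
          refine integral_congr_ae (Filter.Eventually.of_forall fun w => ?_)
          beta_reduce; rw [integral_const_mul]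
  -- L² bound for g via lintegrals
  set Kl := ∫⁻ w, ((‖f (ip (pt : Sphere d) w)‖₊ : ℝ≥0∞)) ^ 2 ∂(sphereMeasure d) with hKldef
  have hKl_lt : Kl < ⊤ := by
    have h := (hf2 (pt : Sphere d)).hasFiniteIntegral
    rw [hasFiniteIntegral_def] at h
    have e : Kl = ∫⁻ w, ((‖f (ip (pt : Sphere d) w) ^ 2‖₊ : ℝ≥0∞)) ∂(sphereMeasure d) :=
      lintegral_congr fun w => by beta_reduce; rw [nnnorm_pow, ENNReal.coe_pow]
    rw [e]; exact h
  have hKl : ∀ x : Sphere d,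
      ∫⁻ w, ((‖f (ip x w)‖₊ : ℝ≥0∞)) ^ 2 ∂(sphereMeasure d) = Kl :=
    fun x => lintegral_ip_congr (fun t => ((‖f t‖₊ : ℝ≥0∞)) ^ 2)
      (hf.enorm.pow_const 2) x pt
  have hKl' : ∀ y : Sphere d,
      ∫⁻ w, ((‖f (ip w y)‖₊ : ℝ≥0∞)) ^ 2 ∂(sphereMeasure d) = Kl := by
    intro y
    have e3 : ∫⁻ w, ((‖f (ip w y)‖₊ : ℝ≥0∞)) ^ 2 ∂(sphereMeasure d)
        = ∫⁻ w, ((‖f (ip y w)‖₊ : ℝ≥0∞)) ^ 2 ∂(sphereMeasure d) :=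
      lintegral_congr fun w => by beta_reduce; rw [ip_comm]
    rw [e3]; exact hKl y
  have hgle : ∀ w : Sphere d, ((‖∫ y, f (ip w y) ∂μ‖₊ : ℝ≥0∞))
      ≤ ∫⁻ y, (‖f (ip w y)‖₊ : ℝ≥0∞) ∂μ :=
    fun w => enorm_integral_le_lintegral_enorm _
  have hT2 : ∫⁻ w, (∫⁻ y, (‖f (ip w y)‖₊ : ℝ≥0∞) ∂μ) ^ 2 ∂(sphereMeasure d) ≤ 2 * Kl := by
    calc ∫⁻ w, (∫⁻ y, (‖f (ip w y)‖₊ : ℝ≥0∞) ∂μ) ^ 2 ∂(sphereMeasure d)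
        = ∫⁻ w, ∫⁻ z : Sphere d × Sphere d,
            (‖f (ip w z.1)‖₊ : ℝ≥0∞) * (‖f (ip w z.2)‖₊ : ℝ≥0∞) ∂(μ.prod μ)
              ∂(sphereMeasure d) := by
          refine lintegral_congr fun w => ?_
          beta_reduce; rw [sq, ← lintegral_prod_mul (f := fun y => (‖f (ip w y)‖₊ : ℝ≥0∞)) (g := fun y => (‖f (ip w y)‖₊ : ℝ≥0∞)) (msec w).enorm.aemeasurable (msec w).enorm.aemeasurable]
      _ = ∫⁻ z : Sphere d × Sphere d, ∫⁻ w,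
            (‖f (ip w z.1)‖₊ : ℝ≥0∞) * (‖f (ip w z.2)‖₊ : ℝ≥0∞) ∂(sphereMeasure d)
              ∂(μ.prod μ) := by
          refine lintegral_lintegral_swap ?_
          exact ((mker.enorm.comp (measurable_fst.prodMk
              (measurable_fst.comp measurable_snd))).mul
            (mker.enorm.comp (measurable_fst.prodMk
              (measurable_snd.comp measurable_snd)))).aemeasurable
      _ ≤ ∫⁻ _z : Sphere d × Sphere d, 2 * Kl ∂(μ.prod μ) := by
          refine lintegral_mono fun z => ?_
          calc ∫⁻ w, (‖f (ip w z.1)‖₊ : ℝ≥0∞) * (‖f (ip w z.2)‖₊ : ℝ≥0∞) ∂(sphereMeasure d)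
              ≤ ∫⁻ w, (‖f (ip w z.1)‖₊ : ℝ≥0∞) ^ 2 + (‖f (ip w z.2)‖₊ : ℝ≥0∞) ^ 2
                  ∂(sphereMeasure d) := by
                refine lintegral_mono fun w => ?_
                rcases le_total ((‖f (ip w z.1)‖₊ : ℝ≥0∞)) ((‖f (ip w z.2)‖₊ : ℝ≥0∞)) with h | h
                · calc (‖f (ip w z.1)‖₊ : ℝ≥0∞) * (‖f (ip w z.2)‖₊ : ℝ≥0∞)
                      ≤ (‖f (ip w z.2)‖₊ : ℝ≥0∞) * (‖f (ip w z.2)‖₊ : ℝ≥0∞) :=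
                        mul_le_mul_left h _
                    _ = (‖f (ip w z.2)‖₊ : ℝ≥0∞) ^ 2 := (sq _).symm
                    _ ≤ _ := self_le_add_left _ _
                · calc (‖f (ip w z.1)‖₊ : ℝ≥0∞) * (‖f (ip w z.2)‖₊ : ℝ≥0∞)
                      ≤ (‖f (ip w z.1)‖₊ : ℝ≥0∞) * (‖f (ip w z.1)‖₊ : ℝ≥0∞) :=
                        mul_le_mul_right h _
                    _ = (‖f (ip w z.1)‖₊ : ℝ≥0∞) ^ 2 := (sq _).symm
                    _ ≤ _ := le_add_of_nonneg_right zero_le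
            _ = Kl + Kl := by
                rw [lintegral_add_left (f := fun w => (‖f (ip w z.1)‖₊ : ℝ≥0∞) ^ 2) ((msec' z.1).enorm.pow_const 2), hKl' z.1, hKl' z.2]
            _ = 2 * Kl := (two_mul Kl).symm
      _ = 2 * Kl := by rw [lintegral_const, measure_univ, mul_one]
  have hg2 : Integrable (fun w => (∫ y, f (ip w y) ∂μ) ^ 2) (sphereMeasure d) := by
    refine ⟨(mg.measurable.pow_const 2).aestronglyMeasurable, ?_⟩
    rw [hasFiniteIntegral_def]
    calc ∫⁻ w, ((‖(∫ y, f (ip w y) ∂μ) ^ 2‖₊ : ℝ≥0∞)) ∂(sphereMeasure d)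
        = ∫⁻ w, ((‖∫ y, f (ip w y) ∂μ‖₊ : ℝ≥0∞)) ^ 2 ∂(sphereMeasure d) :=
          lintegral_congr fun w => by beta_reduce; rw [nnnorm_pow, ENNReal.coe_pow]
      _ ≤ ∫⁻ w, (∫⁻ y, (‖f (ip w y)‖₊ : ℝ≥0∞) ∂μ) ^ 2 ∂(sphereMeasure d) :=
          lintegral_mono fun w => pow_le_pow_left₀ zero_le (hgle w) 2
      _ ≤ 2 * Kl := hT2
      _ < ⊤ := ENNReal.mul_lt_top ENNReal.ofNat_lt_top hKl_lt
  have hg1 : Integrable (fun w => ∫ y, f (ip w y) ∂μ) (sphereMeasure d) :=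
    hL1 _ mg.aestronglyMeasurable hg2
  -- Step B
  have stepB : ∫ x, (∫ w, f (ip x w) * (∫ y, f (ip w y) ∂μ) ∂(sphereMeasure d)) ∂μ
      = ∫ w, (∫ y, f (ip w y) ∂μ) ^ 2 ∂(sphereMeasure d) := by
    set G2 := ∫ w, (∫ y, f (ip w y) ∂μ) ^ 2 ∂(sphereMeasure d) with hG2def
    have hmint : Measurable (Function.uncurry fun x w : Sphere d =>
        f (ip x w) * (∫ y, f (ip w y) ∂μ)) :=
      mker.mul (mg.measurable.comp measurable_snd)
    have hint : Integrable (Function.uncurry fun x w : Sphere d =>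
        f (ip x w) * (∫ y, f (ip w y) ∂μ)) (μ.prod (sphereMeasure d)) := by
      rw [integrable_prod_iff hmint.aestronglyMeasurable]
      constructor
      · exact Filter.Eventually.of_forall fun x =>
          hmulL1 _ _ (msec x).aestronglyMeasurable mg.aestronglyMeasurable (hf2 x) hg2
      · refine (integrable_const ((K2r + G2) / 2)).mono'
          (hmint.norm.aestronglyMeasurable.integral_prod_right')
          (Filter.Eventually.of_forall fun x => ?_)
        rw [Real.norm_eq_abs, abs_of_nonneg (integral_nonneg fun w => norm_nonneg _)]
        calc ∫ w, ‖f (ip x w) * (∫ y, f (ip w y) ∂μ)‖ ∂(sphereMeasure d)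
            ≤ ∫ w, (f (ip x w) ^ 2 + (∫ y, f (ip w y) ∂μ) ^ 2) / 2 ∂(sphereMeasure d) := by
              refine integral_mono (hmulL1 _ _ (msec x).aestronglyMeasurable
                mg.aestronglyMeasurable (hf2 x) hg2).norm
                (((hf2 x).add hg2).div_const 2) fun w => ?_
              rw [Real.norm_eq_abs]; exact habs _ _
          _ = (K2r + G2) / 2 := by rw [integral_div, integral_add (hf2 x) hg2, hK2r x]
    calc ∫ x, (∫ w, f (ip x w) * (∫ y, f (ip w y) ∂μ) ∂(sphereMeasure d)) ∂μ
        = ∫ w, (∫ x, f (ip x w) * (∫ y, f (ip w y) ∂μ) ∂μ) ∂(sphereMeasure d) :=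
          integral_integral_swap hint
      _ = ∫ w, (∫ y, f (ip w y) ∂μ) ^ 2 ∂(sphereMeasure d) := by
          refine integral_congr_ae (Filter.Eventually.of_forall fun w => ?_)
          beta_reduce; rw [integral_mul_const]
          have e : ∫ x, f (ip x w) ∂μ = ∫ y, f (ip w y) ∂μ :=
            integral_congr_ae (Filter.Eventually.of_forall fun x => by beta_reduce; rw [ip_comm])
          rw [e, sq]
  -- Step C
  have stepC : (∫ w, (∫ y, f (ip w y) ∂μ) ∂(sphereMeasure d))
      = ∫ w, f (ip (pt : Sphere d) w) ∂(sphereMeasure d) := by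
    set C1 := ∫ w, |f (ip (pt : Sphere d) w)| ∂(sphereMeasure d) with hC1def
    have hmint : Measurable (Function.uncurry fun y w : Sphere d => f (ip w y)) :=
      hf.comp (measurable_ip2.comp (measurable_snd.prodMk measurable_fst))
    have hint : Integrable (Function.uncurry fun y w : Sphere d => f (ip w y))
        (μ.prod (sphereMeasure d)) := by
      rw [integrable_prod_iff hmint.aestronglyMeasurable]
      constructor
      · exact Filter.Eventually.of_forall fun y => hf1' y
      · refine (integrable_const C1).mono'
          (hmint.norm.aestronglyMeasurable.integral_prod_right')
          (Filter.Eventually.of_forall fun y => ?_)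
        rw [Real.norm_eq_abs, abs_of_nonneg (integral_nonneg fun w => norm_nonneg _)]
        have e1 : ∫ w, ‖f (ip w y)‖ ∂(sphereMeasure d)
            = ∫ w, |f (ip y w)| ∂(sphereMeasure d) :=
          integral_congr_ae (Filter.Eventually.of_forall fun w => by
            beta_reduce; rw [Real.norm_eq_abs, ip_comm])
        refine le_of_eq ?_
        calc ∫ w, ‖f (ip w y)‖ ∂(sphereMeasure d)
            = ∫ w, |f (ip y w)| ∂(sphereMeasure d) := e1
          _ = C1 := integral_ip_congr (fun t => |f t|) y pt
    have hswap := integral_integral_swap hint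
    have lhs : ∫ y, (∫ w, f (ip w y) ∂(sphereMeasure d)) ∂μ
        = ∫ w, f (ip (pt : Sphere d) w) ∂(sphereMeasure d) := by
      have e2 : ∀ y : Sphere d, ∫ w, f (ip w y) ∂(sphereMeasure d)
          = ∫ w, f (ip (pt : Sphere d) w) ∂(sphereMeasure d) := by
        intro y
        have e3 : ∫ w, f (ip w y) ∂(sphereMeasure d) = ∫ w, f (ip y w) ∂(sphereMeasure d) :=
          integral_congr_ae (Filter.Eventually.of_forall fun w => by beta_reduce; rw [ip_comm])
        rw [e3]; exact integral_ip_congr f y pt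
      calc ∫ y, (∫ w, f (ip w y) ∂(sphereMeasure d)) ∂μ
          = ∫ _y, (∫ w, f (ip (pt : Sphere d) w) ∂(sphereMeasure d)) ∂μ := by simp only [e2]
        _ = ∫ w, f (ip (pt : Sphere d) w) ∂(sphereMeasure d) := by
            rw [integral_const]; simp
    rw [lhs] at hswap
    exact hswap.symm
  refine ⟨hg1, hg2, ?_, stepC⟩
  calc ∫ x, ∫ y, (∫ w, f (ip x w) * f (ip w y) ∂(sphereMeasure d)) ∂μ ∂μ
      = ∫ x, (∫ w, f (ip x w) * (∫ y, f (ip w y) ∂μ) ∂(sphereMeasure d)) ∂μ :=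
        integral_congr_ae (Filter.Eventually.of_forall fun x => stepA x)
    _ = _ := stepB

set_option maxHeartbeats 1000000 in
lemma main (f F : ℝ → ℝ) (hf : Measurable f)
    (hf2 : ∀ x : Sphere d, Integrable (fun w => f (ip x w) ^ 2) (sphereMeasure d))
    (hF : ∀ x y : Sphere d, F (ip x y) = ∫ w, f (ip x w) * f (ip w y) ∂(sphereMeasure d))
    (μ : Measure (Sphere d)) [IsProbabilityMeasure μ] :
    (∫ x, ∫ y, F (ip x y) ∂μ ∂μ)
        - (∫ x, ∫ y, F (ip x y) ∂(sphereMeasure d) ∂(sphereMeasure d))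
      = ∫ x, |(∫ y, f (ip x y) ∂μ) - ∫ y, f (ip x y) ∂(sphereMeasure d)| ^ 2
          ∂(sphereMeasure d) := by
  obtain ⟨hg1, hg2, hIF, hgc⟩ := core f hf hf2 μ
  obtain ⟨_, _, hIFσ, _⟩ := core f hf hf2 (sphereMeasure d)
  set c := ∫ w, f (ip (pt : Sphere d) w) ∂(sphereMeasure d) with hcdef
  have eF : ∀ ν : Measure (Sphere d), (∫ x, ∫ y, F (ip x y) ∂ν ∂ν)
      = ∫ x, ∫ y, (∫ w, f (ip x w) * f (ip w y) ∂(sphereMeasure d)) ∂ν ∂ν := by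
    intro ν; simp only [hF]
  have hconst : ∀ x : Sphere d, ∫ y, f (ip x y) ∂(sphereMeasure d) = c :=
    fun x => integral_ip_congr f x pt
  have hIσ : (∫ x, ∫ y, F (ip x y) ∂(sphereMeasure d) ∂(sphereMeasure d)) = c ^ 2 := by
    rw [eF, hIFσ]
    calc ∫ w, (∫ y, f (ip w y) ∂(sphereMeasure d)) ^ 2 ∂(sphereMeasure d)
        = ∫ _w : Sphere d, c ^ 2 ∂(sphereMeasure d) := by simp only [hconst]
      _ = c ^ 2 := by rw [integral_const]; simp
  have hIμ : (∫ x, ∫ y, F (ip x y) ∂μ ∂μ)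
      = ∫ w, (∫ y, f (ip w y) ∂μ) ^ 2 ∂(sphereMeasure d) := by rw [eF, hIF]
  have hRHS : ∫ x, |(∫ y, f (ip x y) ∂μ) - ∫ y, f (ip x y) ∂(sphereMeasure d)| ^ 2
        ∂(sphereMeasure d)
      = (∫ w, (∫ y, f (ip w y) ∂μ) ^ 2 ∂(sphereMeasure d))
        - 2 * c * (∫ w, (∫ y, f (ip w y) ∂μ) ∂(sphereMeasure d)) + c ^ 2 := by
    have e1 : ∀ x : Sphere d,
        |(∫ y, f (ip x y) ∂μ) - ∫ y, f (ip x y) ∂(sphereMeasure d)| ^ 2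
          = (∫ y, f (ip x y) ∂μ) ^ 2 - 2 * c * (∫ y, f (ip x y) ∂μ) + c ^ 2 := by
      intro x; rw [sq_abs, hconst x]; ring
    calc ∫ x, |(∫ y, f (ip x y) ∂μ) - ∫ y, f (ip x y) ∂(sphereMeasure d)| ^ 2
          ∂(sphereMeasure d)
        = ∫ x, ((∫ y, f (ip x y) ∂μ) ^ 2 - 2 * c * (∫ y, f (ip x y) ∂μ) + c ^ 2)
            ∂(sphereMeasure d) := by simp only [e1]
      _ = (∫ w, (∫ y, f (ip w y) ∂μ) ^ 2 ∂(sphereMeasure d))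
          - 2 * c * (∫ w, (∫ y, f (ip w y) ∂μ) ∂(sphereMeasure d)) + c ^ 2 := by
          have i1 : Integrable (fun x => 2 * c * (∫ y, f (ip x y) ∂μ)) (sphereMeasure d) :=
            hg1.const_mul _
          have i2 : Integrable (fun x =>
              (∫ y, f (ip x y) ∂μ) ^ 2 - 2 * c * (∫ y, f (ip x y) ∂μ)) (sphereMeasure d) :=
            hg2.sub i1
          rw [integral_add i2 (integrable_const _), integral_sub hg2 i1, integral_const_mul,
            integral_const]
          simp
  rw [hIμ, hIσ, hRHS, hgc]
  ring

lemma integrable_dirac'' {h : Sphere d → ℝ} (hh : StronglyMeasurable h) (a : Sphere d) :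
    Integrable h (Measure.dirac a) := by
  refine ⟨hh.aestronglyMeasurable, ?_⟩
  rw [hasFiniteIntegral_def, lintegral_dirac' a hh.measurable.enorm]
  exact enorm_lt_top

lemma avg {N : ℕ} (z : Fin N → Sphere d) (h : Sphere d → ℝ) (hh : StronglyMeasurable h) :
    ∫ x, h x ∂(((N : ℝ≥0∞))⁻¹ • ∑ i, Measure.dirac (z i))
      = (1 / (N : ℝ)) * ∑ i, h (z i) := by
  rw [integral_smul_measure,
    integral_finset_sum_measure (fun i _ => integrable_dirac'' hh (z i)),
    Finset.sum_congr rfl (fun i _ => integral_dirac' h (z i) hh),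
    ENNReal.toReal_inv, ENNReal.toReal_natCast, smul_eq_mul, one_div]

end StolAux

open StolAux in
set_option maxHeartbeats 1000000 in
/-- **Generalized Stolarsky principle**: if `F(x·y) = ∫ f(x·z) f(z·y) dσ(z)` for a Borel
function `f` which is square-integrable on the sphere in each variable, then for every Borel
probability measure `μ`, `I_F(μ) - I_F(σ)` equals the squared `L²(σ)` discrepancy of `μ` with
respect to `f`; in particular this holds for the counting measure of a point configuration. -/
theorem generalized_stolarsky (d : ℕ) (hd : 1 ≤ d) (f F : ℝ → ℝ) (hf : Measurable f)
    (hf2 : ∀ x : Sphere d, Integrable (fun w => f (ip x w) ^ 2) (sphereMeasure d))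
    (hF : ∀ x y : Sphere d, F (ip x y) = ∫ w, f (ip x w) * f (ip w y) ∂(sphereMeasure d))
    (μ : Measure (Sphere d)) [IsProbabilityMeasure μ]
    (N : ℕ) (hN : 1 ≤ N) (z : Fin N → Sphere d) :
    ((∫ x, ∫ y, F (ip x y) ∂μ ∂μ)
        - (∫ x, ∫ y, F (ip x y) ∂(sphereMeasure d) ∂(sphereMeasure d))
      = ∫ x, |(∫ y, f (ip x y) ∂μ) - ∫ y, f (ip x y) ∂(sphereMeasure d)| ^ 2 ∂(sphereMeasure d))
    ∧ ((1 / (N : ℝ) ^ 2) * (∑ i, ∑ j, F (ip (z i) (z j)))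
        - (∫ x, ∫ y, F (ip x y) ∂(sphereMeasure d) ∂(sphereMeasure d))
      = ∫ x, |(1 / (N : ℝ)) * (∑ i, f (ip x (z i)))
          - ∫ y, f (ip x y) ∂(sphereMeasure d)| ^ 2 ∂(sphereMeasure d)) := by
  constructor
  · exact main f F hf hf2 hF μ
  · set ν : Measure (Sphere d) := ((N : ℝ≥0∞))⁻¹ • ∑ i, Measure.dirac (z i) with hνdef
    haveI hprob : IsProbabilityMeasure ν := by
      constructor
      rw [hνdef, Measure.smul_apply, Measure.finset_sum_apply]
      simp only [measure_univ]
      rw [Finset.sum_const, Finset.card_univ, Fintype.card_fin, nsmul_eq_mul, mul_one,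
        smul_eq_mul]
      refine ENNReal.inv_mul_cancel ?_ (ENNReal.natCast_ne_top N)
      exact_mod_cast Nat.one_le_iff_ne_zero.mp hN
    have hFsm1 : ∀ x : Sphere d, StronglyMeasurable fun y : Sphere d => F (ip x y) := by
      intro x
      have e : (fun y : Sphere d => F (ip x y))
          = fun y => ∫ w, f (ip x w) * f (ip w y) ∂(sphereMeasure d) := funext fun y => hF x y
      rw [e]
      exact MeasureTheory.StronglyMeasurable.integral_prod_right
        (f := fun y w : Sphere d => f (ip x w) * f (ip w y))
        ((hf.comp (measurable_ip2.comp (measurable_const.prodMk measurable_snd))).mul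
          (hf.comp (measurable_ip2.comp (measurable_snd.prodMk measurable_fst)))).stronglyMeasurable
    have hFsm2 : ∀ j, StronglyMeasurable fun x : Sphere d => F (ip x (z j)) := by
      intro j
      have e : (fun x : Sphere d => F (ip x (z j)))
          = fun x => ∫ w, f (ip x w) * f (ip w (z j)) ∂(sphereMeasure d) :=
        funext fun x => hF x (z j)
      rw [e]
      exact MeasureTheory.StronglyMeasurable.integral_prod_right
        (f := fun x w : Sphere d => f (ip x w) * f (ip w (z j)))
        ((hf.comp measurable_ip2).mul
          (hf.comp (measurable_ip2.comp (measurable_snd.prodMk measurable_const)))).stronglyMeasurable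
    have hsum_sm : StronglyMeasurable fun x : Sphere d =>
        (1 / (N : ℝ)) * ∑ j, F (ip x (z j)) := by
      have hms : Measurable fun x : Sphere d => ∑ j, F (ip x (z j)) :=
        Finset.measurable_sum _ fun j _ => (hFsm2 j).measurable
      exact (hms.const_mul _).stronglyMeasurable
    have h2 := main f F hf hf2 hF ν
    have eInner : ∀ x : Sphere d, ∫ y, F (ip x y) ∂ν = (1 / (N : ℝ)) * ∑ j, F (ip x (z j)) :=
      fun x => avg z _ (hFsm1 x)
    have eOuter : ∫ x, ∫ y, F (ip x y) ∂ν ∂ν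
        = (1 / (N : ℝ) ^ 2) * ∑ i, ∑ j, F (ip (z i) (z j)) := by
      calc ∫ x, ∫ y, F (ip x y) ∂ν ∂ν
          = ∫ x, ((1 / (N : ℝ)) * ∑ j, F (ip x (z j))) ∂ν := by simp only [eInner]
        _ = (1 / (N : ℝ)) * ∑ i, ((1 / (N : ℝ)) * ∑ j, F (ip (z i) (z j))) := avg z _ hsum_sm
        _ = (1 / (N : ℝ) ^ 2) * ∑ i, ∑ j, F (ip (z i) (z j)) := by
            rw [Finset.mul_sum, Finset.mul_sum]
            exact Finset.sum_congr rfl fun i _ => by ring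
    have eg : ∀ x : Sphere d, ∫ y, f (ip x y) ∂ν = (1 / (N : ℝ)) * ∑ i, f (ip x (z i)) :=
      fun x => avg z _
        (hf.comp (measurable_ip2.comp (measurable_const.prodMk measurable_id))).stronglyMeasurable
    rw [eOuter] at h2
    simp only [eg] at h2
    exact h2
end
end
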